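/- arXiv:1710.00223 — 13 statements merged into one kernel-verified Lean document; each statement's English description precedes it below -/
import Mathlib

section
/- Let G be a finite simple graph and X ⊆ V(G) a set of d vertices such that the induced subgraph G \ X is a cluster graph. Then G admits a conflict-free closed neighborhood coloring with at most d + 2 colors; that is, χcf[G] ≤ d + 2. -/
def IsCFCN {W S : Type*} (H : SimpleGraph W) (c : W → S) : Prop :=
  ∀ v : W, ∃ a : S, ∃! u : W, (H.Adj v u ∨ u = v) ∧ c u = a

def clusterSetoid {V : Type*} (G : SimpleGraph V) (X : Finset V)
    (hcluster : ∀ u v w : V, u ∉ X → v ∉ X → w ∉ X →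
      G.Adj u v → G.Adj v w → u ≠ w → G.Adj u w) :
    Setoid {v : V // v ∉ X} where
  r a b := a = b ∨ G.Adj a b
  iseqv := by
    refine ⟨fun a => Or.inl rfl, ?_, ?_⟩
    · rintro a b (rfl | h)
      · exact Or.inl rfl
      · exact Or.inr h.symm
    · rintro a b c (rfl | hab) (rfl | hbc)
      · exact Or.inl rfl
      · exact Or.inr hbc
      · exact Or.inr hab
      · by_cases hac : a = c
        · exact Or.inl (Subtype.ext (by exact_mod_cast congrArg Subtype.val hac))
        · exact Or.inr (hcluster a b c a.2 b.2 c.2 hab hbc (fun h => hac (Subtype.ext h)))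

/-- If deleting the `d`-element vertex set `X` from `G` leaves a cluster graph
(every connected component is a clique, i.e. the induced graph is `P₃`-free),
then `G` has a CF-CN coloring with at most `d + 2` colors. -/
theorem cfcn_le_cluster_deletion_add_two {V : Type*} [Fintype V] [DecidableEq V]
    (G : SimpleGraph V) (X : Finset V) (d : ℕ) (hX : X.card = d)
    (hcluster : ∀ u v w : V, u ∉ X → v ∉ X → w ∉ X →
      G.Adj u v → G.Adj v w → u ≠ w → G.Adj u w) :
    ∃ c : V → Fin (d + 2), IsCFCN G c := by
  classical
  set s := clusterSetoid G X hcluster with hs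
  let rep : {v : V // v ∉ X} → {v : V // v ∉ X} := fun v => (Quotient.mk s v).out
  have hrep_rel : ∀ v, s.r (rep v) v := fun v => Quotient.exact (Quotient.out_eq _)
  have hrep_eq : ∀ u v, s.r u v → rep u = rep v := fun u v h => by
    simp only [rep, Quotient.sound h]
  let c : V → Fin (d + 2) := fun v =>
    if hv : v ∈ X then ⟨(X.equivFin ⟨v, hv⟩).val + 2, by
      have := (X.equivFin ⟨v, hv⟩).isLt; omega⟩
    else if rep ⟨v, hv⟩ = ⟨v, hv⟩ then 1 else 0
  have hcX : ∀ v (hv : v ∈ X), (c v).val = (X.equivFin ⟨v, hv⟩).val + 2 := by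
    intro v hv; simp only [c, dif_pos hv]
  have hcOut : ∀ v (hv : v ∉ X), (c v).val ≤ 1 := by
    intro v hv; simp only [c, dif_neg hv]
    split <;> simp
  refine ⟨c, fun v => ?_⟩
  by_cases hv : v ∈ X
  · -- v's own color is unique
    refine ⟨c v, v, ⟨Or.inr rfl, rfl⟩, ?_⟩
    rintro u ⟨_, hcu⟩
    by_cases hu : u ∈ X
    · have : (X.equivFin ⟨u, hu⟩).val + 2 = (X.equivFin ⟨v, hv⟩).val + 2 := by
        rw [← hcX u hu, ← hcX v hv, hcu]
      have := X.equivFin.injective (Fin.ext (by omega : (X.equivFin ⟨u, hu⟩).val = (X.equivFin ⟨v, hv⟩).val))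
      exact congrArg Subtype.val this
    · have h1 := hcOut u hu
      have h2 := hcX v hv
      have : (c u).val = (c v).val := congrArg Fin.val hcu
      omega
  · -- color 1, achieved uniquely by the representative of v's clique
    refine ⟨1, (rep ⟨v, hv⟩).val, ⟨?_, ?_⟩, ?_⟩
    · rcases hrep_rel ⟨v, hv⟩ with h | h
      · exact Or.inr (congrArg Subtype.val h)
      · exact Or.inl h.symm
    · have hr : (rep ⟨v, hv⟩).val ∉ X := (rep ⟨v, hv⟩).2
      have : rep ⟨(rep ⟨v, hv⟩).val, hr⟩ = rep ⟨v, hv⟩ := by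
        exact hrep_eq _ _ (hrep_rel ⟨v, hv⟩)
      simp only [c, dif_neg hr, this]
      simp
    · rintro u ⟨hadj, hcu⟩
      by_cases hu : u ∈ X
      · have := hcX u hu
        have : (c u).val = 1 := congrArg Fin.val hcu
        omega
      · -- c u = 1 means rep u = u
        have hrepu : rep ⟨u, hu⟩ = ⟨u, hu⟩ := by
          by_contra h
          simp only [c, dif_neg hu, if_neg h] at hcu
          exact absurd (congrArg Fin.val hcu) (by simp)
        have hrel : s.r (⟨u, hu⟩ : {v : V // v ∉ X}) ⟨v, hv⟩ := by
          rcases hadj with h | h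
          · exact Or.inr h.symm
          · exact Or.inl (Subtype.ext h)
        have := hrep_eq _ _ hrel
        rw [hrepu] at this
        exact congrArg Subtype.val this
end

section
/- Let G be a finite simple graph, X ⊆ V(G) with G \ X a cluster graph, let C be a connected component (a clique) of G \ X, let Y ⊆ X, and let T = {u ∈ C : N(u) ∩ X = Y}. Suppose |T| > k + 1 and let G' be the graph obtained from G by deleting all but k + 1 of the vertices of T. Then G admits a conflict-free closed neighborhood coloring with k colors if and only if G' does. -/
/-- Reduction rule for CF-CN coloring: if `G \ X` is a cluster graph, `C` is a
connected component (a clique) of `G \ X`, `Y ⊆ X`, and the type class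
`T = {u ∈ C : N(u) ∩ X = Y}` has more than `k + 1` vertices, then deleting all but
`k + 1` vertices of `T` (the deleted set is `D`) preserves CF-CN `k`-colorability. -/
theorem cfcn_reduction_type_class {V : Type*} [Fintype V] [DecidableEq V]
    (G : SimpleGraph V) [DecidableRel G.Adj] (X : Finset V)
    (hcluster : ∀ u v w : V, u ∉ X → v ∉ X → w ∉ X →
      G.Adj u v → G.Adj v w → u ≠ w → G.Adj u w)
    (C : Finset V)
    (hCX : ∀ v ∈ C, v ∉ X)
    (hCne : C.Nonempty)
    (hCclique : ∀ u ∈ C, ∀ v ∈ C, u ≠ v → G.Adj u v)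
    (hCclosed : ∀ u ∈ C, ∀ v : V, v ∉ X → G.Adj u v → v ∈ C)
    (Y : Finset V) (hY : Y ⊆ X) (k : ℕ)
    (T : Finset V) (hT : T = C.filter (fun u => X.filter (fun x => G.Adj u x) = Y))
    (hTbig : k + 1 < T.card)
    (D : Finset V) (hD : D ⊆ T) (hrest : (T \ D).card = k + 1) :
    (∃ c : V → Fin k, IsCFCN G c) ↔
      (∃ c' : {v : V | v ∉ D} → Fin k, IsCFCN (G.induce {v : V | v ∉ D}) c') := by
  classical
  have hTC : T ⊆ C := by rw [hT]; exact Finset.filter_subset _ _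
  have hDT : D ⊆ T := hD
  -- closed neighborhood of any vertex of `T` is exactly `C ∪ Y`
  have hNT : ∀ t ∈ T, ∀ w : V, (G.Adj t w ∨ w = t) ↔ (w ∈ C ∨ w ∈ Y) := by
    intro t ht w
    have htC : t ∈ C := hTC ht
    have htY : X.filter (fun x => G.Adj t x) = Y := by
      rw [hT] at ht
      exact (Finset.mem_filter.mp ht).2
    constructor
    · rintro (h | rfl)
      · by_cases hw : w ∈ X
        · right
          rw [← htY]
          exact Finset.mem_filter.mpr ⟨hw, h⟩
        · left
          exact hCclosed t htC w hw h
      · left; exact htC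
    · rintro (h | h)
      · rcases eq_or_ne w t with rfl | hne
        · right; rfl
        · left; exact hCclique t htC w h (Ne.symm hne)
      · left
        rw [← htY] at h
        exact (Finset.mem_filter.mp h).2
  have hNT' : ∀ t ∈ T, ∀ v : V, (G.Adj v t ∨ t = v) ↔ (v ∈ C ∨ v ∈ Y) := by
    intro t ht v
    rw [← hNT t ht v]
    constructor
    · rintro (h | h)
      exacts [Or.inl h.symm, Or.inr h.symm]
    · rintro (h | h)
      exacts [Or.inl h.symm, Or.inr h.symm]
  -- transfer of closed-neighborhood membership between `G` and the induced graph
  have hco : ∀ (x y : {v : V | v ∉ D}),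
      ((G.induce {v : V | v ∉ D}).Adj x y ∨ y = x) ↔ (G.Adj ↑x ↑y ∨ (y : V) = ↑x) := by
    intro x y
    constructor
    · rintro (h | h)
      · left; exact h
      · right; exact congrArg Subtype.val h
    · rintro (h | h)
      · left; exact h
      · right; exact Subtype.ext h
  constructor
  · -- forward direction
    rintro ⟨c, hc⟩
    set S₁ : Finset (Fin k) :=
      Finset.univ.filter (fun a => (T.filter (fun t => c t = a)).card = 1) with hS₁def
    obtain ⟨a₀, -, ha₀⟩ :
        ∃ a ∈ (Finset.univ : Finset (Fin k)), 1 < (T.filter (fun t => c t = a)).card := by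
      apply Finset.exists_lt_card_fiber_of_mul_lt_card_of_maps_to
        (fun x _ => Finset.mem_univ (c x))
      simp only [Finset.card_univ, Fintype.card_fin, mul_one]
      omega
    have ha₀S : a₀ ∉ S₁ := by
      simp only [hS₁def, Finset.mem_filter, Finset.mem_univ, true_and]
      omega
    have hcardS : S₁.card ≤ (T \ D).card := by
      rw [hrest]
      calc S₁.card ≤ Fintype.card (Fin k) := Finset.card_le_univ S₁
        _ ≤ k + 1 := by simp
    obtain ⟨U, hU_sub, hU_card⟩ := Finset.exists_subset_card_eq hcardS
    let e : {x // x ∈ S₁} ≃ {x // x ∈ U} := Finset.equivOfCardEq hU_card.symm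
    set g : V → Fin k :=
      fun v => if h : v ∈ U then (e.symm ⟨v, h⟩ : Fin k)
        else if v ∈ T \ D then a₀ else c v with hgdef
    have hg_off : ∀ v : V, v ∉ T → g v = c v := by
      intro v hv
      have h1 : v ∉ U := fun h => hv ((Finset.mem_sdiff.mp (hU_sub h)).1)
      have h2 : v ∉ T \ D := fun h => hv ((Finset.mem_sdiff.mp h).1)
      rw [hgdef]
      simp only [dif_neg h1, if_neg h2]
    have hg_unique : ∀ a, ∀ ha : a ∈ S₁,
        ∃ w ∈ T \ D, g w = a ∧ ∀ w' ∈ T \ D, g w' = a → w' = w := by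
      intro a ha
      have hmem : ((e ⟨a, ha⟩ : {x // x ∈ U}) : V) ∈ U := (e ⟨a, ha⟩).2
      refine ⟨(e ⟨a, ha⟩ : {x // x ∈ U}), hU_sub hmem, ?_, ?_⟩
      · rw [hgdef]
        simp only [dif_pos hmem]
        have h2 : (⟨((e ⟨a, ha⟩ : {x // x ∈ U}) : V), hmem⟩ : {x // x ∈ U}) = e ⟨a, ha⟩ :=
          Subtype.ext rfl
        rw [h2, Equiv.symm_apply_apply]
      · intro w' hw' hgw'
        rw [hgdef] at hgw'
        by_cases h : w' ∈ U
        · simp only [dif_pos h] at hgw'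
          have h3 : (⟨w', h⟩ : {x // x ∈ U}) = e ⟨a, ha⟩ := by
            apply e.symm.injective
            rw [Equiv.symm_apply_apply]
            exact Subtype.ext hgw'
          exact congrArg Subtype.val h3
        · simp only [dif_neg h, if_pos hw'] at hgw'
          subst hgw'
          exact absurd ha ha₀S
    have hg_none : ∀ a : Fin k, a ∉ S₁ → a ≠ a₀ → ∀ w ∈ T \ D, g w ≠ a := by
      intro a haS haA w hw hgw
      rw [hgdef] at hgw
      by_cases h : w ∈ U
      · simp only [dif_pos h] at hgw
        exact haS (hgw ▸ (e.symm ⟨w, h⟩).2)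
      · simp only [dif_neg h, if_pos hw] at hgw
        exact haA hgw.symm
    refine ⟨fun v => g ↑v, ?_⟩
    intro v
    by_cases hvCY : (v : V) ∈ C ∨ (v : V) ∈ Y
    · obtain ⟨a, u, ⟨hu_adj, hu_col⟩, hu_uniq⟩ := hc ↑v
      have hTN : ∀ t ∈ T, G.Adj ↑v t ∨ t = ↑v := fun t ht => (hNT' t ht ↑v).mpr hvCY
      by_cases huT : u ∈ T
      · -- the unique color for `v` sits inside `T`
        have haS : a ∈ S₁ := by
          simp only [hS₁def, Finset.mem_filter, Finset.mem_univ, true_and]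
          rw [Finset.card_eq_one]
          refine ⟨u, Finset.eq_singleton_iff_unique_mem.mpr
            ⟨Finset.mem_filter.mpr ⟨huT, hu_col⟩, ?_⟩⟩
          intro t ht
          obtain ⟨htT, htc⟩ := Finset.mem_filter.mp ht
          exact hu_uniq t ⟨hTN t htT, htc⟩
        obtain ⟨w, hwTD, hwg, hw_uniq⟩ := hg_unique a haS
        have hwD : w ∉ D := (Finset.mem_sdiff.mp hwTD).2
        have hwT : w ∈ T := (Finset.mem_sdiff.mp hwTD).1
        refine ⟨a, ⟨w, hwD⟩, ⟨(hco v ⟨w, hwD⟩).mpr (hTN w hwT), hwg⟩, ?_⟩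
        rintro ⟨x, hxD⟩ ⟨hadj, hcol⟩
        have hcol2 : g x = a := hcol
        have hxN : G.Adj ↑v x ∨ x = ↑v := (hco v ⟨x, hxD⟩).mp hadj
        by_cases hxT : x ∈ T
        · exact Subtype.ext (hw_uniq x (Finset.mem_sdiff.mpr ⟨hxT, hxD⟩) hcol2)
        · rw [hg_off x hxT] at hcol2
          have hxu := hu_uniq x ⟨hxN, hcol2⟩
          exact absurd huT (hxu ▸ hxT)
      · -- the unique color for `v` lies outside `T`
        have hTno : ∀ t ∈ T, c t ≠ a := by
          intro t ht hct
          exact huT ((hu_uniq t ⟨hTN t ht, hct⟩) ▸ ht)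
        have hfilt : T.filter (fun t => c t = a) = ∅ :=
          Finset.filter_eq_empty_iff.mpr (by intro x hx; exact hTno x hx)
        have haS : a ∉ S₁ := by
          simp only [hS₁def, Finset.mem_filter, Finset.mem_univ, true_and, hfilt]
          simp
        have haA : a ≠ a₀ := by
          intro h
          rw [← h, hfilt] at ha₀
          simp at ha₀
        have huD : u ∉ D := fun h => huT (hDT h)
        have hu_colg : g u = a := by rw [hg_off u huT]; exact hu_col
        refine ⟨a, ⟨u, huD⟩, ⟨(hco v ⟨u, huD⟩).mpr hu_adj, hu_colg⟩, ?_⟩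
        rintro ⟨x, hxD⟩ ⟨hadj, hcol⟩
        have hcol2 : g x = a := hcol
        have hxN : G.Adj ↑v x ∨ x = ↑v := (hco v ⟨x, hxD⟩).mp hadj
        have hxT : x ∉ T := by
          intro hxT
          exact hg_none a haS haA x (Finset.mem_sdiff.mpr ⟨hxT, hxD⟩) hcol2
        rw [hg_off x hxT] at hcol2
        exact Subtype.ext (hu_uniq x ⟨hxN, hcol2⟩)
    · -- `v` is outside `C ∪ Y`, so its closed neighborhood avoids `T`
      obtain ⟨a, u, ⟨hu_adj, hu_col⟩, hu_uniq⟩ := hc ↑v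
      have hnoT : ∀ t ∈ T, ¬(G.Adj ↑v t ∨ t = ↑v) := fun t ht h => hvCY ((hNT' t ht ↑v).mp h)
      have huT : u ∉ T := fun h => hnoT u h hu_adj
      have huD : u ∉ D := fun h => huT (hDT h)
      have hu_colg : g u = a := by rw [hg_off u huT]; exact hu_col
      refine ⟨a, ⟨u, huD⟩, ⟨(hco v ⟨u, huD⟩).mpr hu_adj, hu_colg⟩, ?_⟩
      rintro ⟨x, hxD⟩ ⟨hadj, hcol⟩
      have hcol2 : g x = a := hcol
      have hxN : G.Adj ↑v x ∨ x = ↑v := (hco v ⟨x, hxD⟩).mp hadj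
      have hxT : x ∉ T := fun h => hnoT x h hxN
      rw [hg_off x hxT] at hcol2
      exact Subtype.ext (hu_uniq x ⟨hxN, hcol2⟩)
  · -- backward direction
    rintro ⟨c', hc'⟩
    have hTDne : (T \ D).Nonempty := by
      rw [← Finset.card_pos, hrest]; omega
    obtain ⟨t₀, ht₀⟩ := hTDne
    have ht₀D : t₀ ∉ D := (Finset.mem_sdiff.mp ht₀).2
    set f : V → Fin k :=
      fun v => if h : v ∉ D then c' ⟨v, h⟩ else c' ⟨t₀, ht₀D⟩ with hfdef
    have hf_eq : ∀ (x : V) (hx : x ∉ D), f x = c' ⟨x, hx⟩ := by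
      intro x hx
      rw [hfdef]
      simp only [dif_pos hx]
    obtain ⟨t₁, ht₁, t₂, ht₂, hne12, heq12⟩ :=
      Finset.exists_ne_map_eq_of_card_lt_of_maps_to
        (t := (Finset.univ : Finset (Fin k))) (s := T \ D)
        (by rw [hrest]; simpa using Nat.lt_succ_self k) (fun a _ => Finset.mem_univ (f a))
    have h1D : t₁ ∉ D := (Finset.mem_sdiff.mp ht₁).2
    have h2D : t₂ ∉ D := (Finset.mem_sdiff.mp ht₂).2
    have h1T : t₁ ∈ T := (Finset.mem_sdiff.mp ht₁).1
    have h2T : t₂ ∈ T := (Finset.mem_sdiff.mp ht₂).1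
    set a₀ : Fin k := f t₁ with ha₀def
    set cext : V → Fin k := fun v => if h : v ∉ D then c' ⟨v, h⟩ else a₀ with hcextdef
    have hcext_D : ∀ x ∈ D, cext x = a₀ := by
      intro x hx
      rw [hcextdef]
      simp only [dif_neg (not_not_intro hx)]
    have hcext_nD : ∀ (x : V) (hx : x ∉ D), cext x = c' ⟨x, hx⟩ := by
      intro x hx
      rw [hcextdef]
      simp only [dif_pos hx]
    -- a unique color in the closed neighborhood of a vertex of `C ∪ Y` cannot be `a₀`
    have hne_a₀ : ∀ (p : {v : V | v ∉ D}), ((p : V) ∈ C ∨ (p : V) ∈ Y) → ∀ a : Fin k,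
        (∃! u : {v : V | v ∉ D},
          ((G.induce {v : V | v ∉ D}).Adj p u ∨ u = p) ∧ c' u = a) → a ≠ a₀ := by
      rintro p hp a ⟨u, -, huniq⟩ haa
      have m1 : (G.induce {v : V | v ∉ D}).Adj p ⟨t₁, h1D⟩ ∨ (⟨t₁, h1D⟩ : {v : V | v ∉ D}) = p :=
        (hco p ⟨t₁, h1D⟩).mpr ((hNT' t₁ h1T ↑p).mpr hp)
      have m2 : (G.induce {v : V | v ∉ D}).Adj p ⟨t₂, h2D⟩ ∨ (⟨t₂, h2D⟩ : {v : V | v ∉ D}) = p :=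
        (hco p ⟨t₂, h2D⟩).mpr ((hNT' t₂ h2T ↑p).mpr hp)
      have col1 : c' ⟨t₁, h1D⟩ = a := by rw [haa, ha₀def, hf_eq t₁ h1D]
      have col2 : c' ⟨t₂, h2D⟩ = a := by rw [haa, heq12, hf_eq t₂ h2D]
      have e1 := huniq ⟨t₁, h1D⟩ ⟨m1, col1⟩
      have e2 := huniq ⟨t₂, h2D⟩ ⟨m2, col2⟩
      exact hne12 (congrArg Subtype.val (e1.trans e2.symm))
    refine ⟨cext, ?_⟩
    intro v
    by_cases hvD : v ∈ D
    · -- deleted vertex: use `t₁` as a proxy (same closed neighborhood `C ∪ Y`)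
      have hvT : v ∈ T := hDT hvD
      obtain ⟨a, u, ⟨hu_adj, hu_col⟩, hu_uniq⟩ := hc' ⟨t₁, h1D⟩
      have ha : a ≠ a₀ :=
        hne_a₀ ⟨t₁, h1D⟩ (Or.inl (hTC h1T)) a ⟨u, ⟨hu_adj, hu_col⟩, hu_uniq⟩
      have huN : G.Adj t₁ ↑u ∨ (u : V) = t₁ := (hco ⟨t₁, h1D⟩ u).mp hu_adj
      have huCY : (u : V) ∈ C ∨ (u : V) ∈ Y := (hNT t₁ h1T ↑u).mp huN
      have hvN : G.Adj v ↑u ∨ (u : V) = v := (hNT v hvT ↑u).mpr huCY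
      have huD : (u : V) ∉ D := u.2
      have hu_colx : cext ↑u = a := by
        rw [hcext_nD ↑u huD]
        exact hu_col
      refine ⟨a, ↑u, ⟨hvN, hu_colx⟩, ?_⟩
      rintro x ⟨hxN, hxcol⟩
      have hxCY : x ∈ C ∨ x ∈ Y := (hNT v hvT x).mp hxN
      by_cases hxD : x ∈ D
      · rw [hcext_D x hxD] at hxcol
        exact absurd hxcol.symm ha
      · have hxN' : G.Adj t₁ x ∨ x = t₁ := (hNT t₁ h1T x).mpr hxCY
        rw [hcext_nD x hxD] at hxcol
        exact congrArg Subtype.val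
          (hu_uniq ⟨x, hxD⟩ ⟨(hco ⟨t₁, h1D⟩ ⟨x, hxD⟩).mpr hxN', hxcol⟩)
    · -- surviving vertex
      obtain ⟨a, u, ⟨hu_adj, hu_col⟩, hu_uniq⟩ := hc' ⟨v, hvD⟩
      have huN : G.Adj v ↑u ∨ (u : V) = v := (hco ⟨v, hvD⟩ u).mp hu_adj
      have huD : (u : V) ∉ D := u.2
      have hkey : ∀ x ∈ D, (G.Adj v x ∨ x = v) → a ≠ a₀ := by
        intro x hxD hxN
        have hvCY : v ∈ C ∨ v ∈ Y := (hNT' x (hDT hxD) v).mp hxN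
        exact hne_a₀ ⟨v, hvD⟩ hvCY a ⟨u, ⟨hu_adj, hu_col⟩, hu_uniq⟩
      have hu_colx : cext ↑u = a := by
        rw [hcext_nD ↑u huD]
        exact hu_col
      refine ⟨a, ↑u, ⟨huN, hu_colx⟩, ?_⟩
      rintro x ⟨hxN, hxcol⟩
      by_cases hxD : x ∈ D
      · rw [hcext_D x hxD] at hxcol
        exact absurd hxcol.symm (hkey x hxD hxN)
      · rw [hcext_nD x hxD] at hxcol
        exact congrArg Subtype.val
          (hu_uniq ⟨x, hxD⟩ ⟨(hco ⟨v, hvD⟩ ⟨x, hxD⟩).mpr hxN, hxcol⟩)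
end

section
/- Let G be a finite simple graph and X ⊆ V(G) with |X| = d such that G \ X is a cluster graph. Suppose C₁, …, C_{d+2} are d + 2 distinct connected components (cliques) of G \ X that pairwise have the same type vector: for every pair i, j there is a bijection φ between the vertex sets of C_i and C_j with N(u) ∩ X = N(φ(u)) ∩ X for every vertex u of C_i. Let G' be the graph obtained from G by deleting all vertices of C_{d+2}. Then G admits a conflict-free closed neighborhood coloring with k colors if and only if G' does. -/
/-- Transfer principle: if the closed neighborhood of `v₁` in `H₁` maps (preserving colors
and the closed neighborhood) into that of `v₂` in `H₂`, `w` is the unique vertex of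
color `b` in `N[v₂]`, and `z₁` is the unique preimage of `w` in `N[v₁]`, then `v₁` has a
uniquely-colored vertex in its closed neighborhood. -/
lemma cfcn_transfer {V₁ V₂ S : Type*} {H₁ : SimpleGraph V₁} {H₂ : SimpleGraph V₂}
    {c₁ : V₁ → S} {c₂ : V₂ → S} {v₁ : V₁} {v₂ : V₂} (τ : V₁ → V₂) (b : S) (w : V₂)
    (hmap : ∀ z, (H₁.Adj v₁ z ∨ z = v₁) →
      (H₂.Adj v₂ (τ z) ∨ τ z = v₂) ∧ c₂ (τ z) = c₁ z)
    (hwb : c₂ w = b)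
    (huniq : ∀ y, (H₂.Adj v₂ y ∨ y = v₂) ∧ c₂ y = b → y = w)
    (z₁ : V₁) (hz₁ : H₁.Adj v₁ z₁ ∨ z₁ = v₁) (hz₁w : τ z₁ = w)
    (hinj : ∀ z, (H₁.Adj v₁ z ∨ z = v₁) → τ z = w → z = z₁) :
    ∃ a : S, ∃! u : V₁, (H₁.Adj v₁ u ∨ u = v₁) ∧ c₁ u = a := by
  refine ⟨b, z₁, ⟨hz₁, ?_⟩, fun z hz => ?_⟩
  · have h := (hmap z₁ hz₁).2
    rw [hz₁w, hwb] at h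
    exact h.symm
  · exact hinj z hz.1 (huniq (τ z) ⟨(hmap z hz.1).1, by rw [(hmap z hz.1).2, hz.2]⟩)

/-- Pigeonhole: given `d + 2` pairwise disjoint finsets and a function `W` from a
`d`-element finset, some finset other than the last one avoids the range of `W`. -/
lemma aux_free_index {V : Type*} [DecidableEq V] {d : ℕ} (X : Finset V) (hX : X.card = d)
    (Cs : Fin (d + 2) → Finset V)
    (hdisj : ∀ i j : Fin (d + 2), i ≠ j → ∀ v, v ∈ Cs i → v ∈ Cs j → False)
    (W : {x // x ∈ X} → V) :
    ∃ a : Fin (d + 2), a ≠ Fin.last (d + 1) ∧ ∀ x, W x ∉ Cs a := by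
  classical
  set B : Finset (Fin (d + 2)) := Finset.univ.filter (fun i => ∃ x, W x ∈ Cs i) with hB
  have hcard : B.card ≤ d := by
    have hle : B.card ≤ X.attach.card := by
      apply Finset.card_le_card_of_surjOn (f := fun x : {x // x ∈ X} =>
        if h : ∃ i, W x ∈ Cs i then h.choose else 0)
      intro i hi
      have hi' : ∃ x, W x ∈ Cs i := by
        have := Finset.mem_coe.mp hi
        rw [hB, Finset.mem_filter] at this
        exact this.2
      obtain ⟨x, hx⟩ := hi'
      refine ⟨x, by simp, ?_⟩
      have hex : ∃ j, W x ∈ Cs j := ⟨i, hx⟩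
      simp only [dif_pos hex]
      by_contra hne
      exact hdisj _ _ hne _ hex.choose_spec hx
    simpa [Finset.card_attach, hX] using hle
  have h2 : 1 < Bᶜ.card := by
    have h := Finset.card_compl B
    have : Fintype.card (Fin (d + 2)) = d + 2 := Fintype.card_fin _
    omega
  obtain ⟨a, ha, b, hb, hab⟩ := Finset.one_lt_card.mp h2
  have hfree : ∀ i ∈ Bᶜ, ∀ x, W x ∉ Cs i := by
    intro i hi x hx
    rw [Finset.mem_compl, hB, Finset.mem_filter] at hi
    exact hi ⟨Finset.mem_univ i, x, hx⟩
  by_cases haL : a = Fin.last (d + 1)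
  · exact ⟨b, fun h => hab (haL.trans h.symm), hfree b hb⟩
  · exact ⟨a, haL, hfree a ha⟩

/-- Reduction rule for CF-CN coloring: if `G \ X` is a cluster graph (with `|X| = d`)
and `C₁, …, C_{d+2}` are `d + 2` distinct connected components (cliques) of `G \ X`
that pairwise have the same type vector (there is a bijection between their vertex
sets preserving the neighborhood inside `X`), then deleting all vertices of the last
component `C_{d+2}` preserves CF-CN `k`-colorability. -/
theorem cfcn_reduction_mega_type {V : Type*} [Fintype V] [DecidableEq V]
    (G : SimpleGraph V) [DecidableRel G.Adj] (X : Finset V) (d : ℕ) (hX : X.card = d)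
    (hcluster : ∀ u v w : V, u ∉ X → v ∉ X → w ∉ X →
      G.Adj u v → G.Adj v w → u ≠ w → G.Adj u w)
    (Cs : Fin (d + 2) → Finset V)
    (hCX : ∀ i, ∀ v ∈ Cs i, v ∉ X)
    (hCne : ∀ i, (Cs i).Nonempty)
    (hCclique : ∀ i, ∀ u ∈ Cs i, ∀ v ∈ Cs i, u ≠ v → G.Adj u v)
    (hCclosed : ∀ i, ∀ u ∈ Cs i, ∀ v : V, v ∉ X → G.Adj u v → v ∈ Cs i)
    (hdistinct : ∀ i j : Fin (d + 2), i ≠ j → Cs i ≠ Cs j)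
    (hsametype : ∀ i j : Fin (d + 2),
      ∃ φ : {v : V // v ∈ Cs i} ≃ {v : V // v ∈ Cs j},
        ∀ u : {v : V // v ∈ Cs i},
          X.filter (fun x => G.Adj u.1 x) = X.filter (fun x => G.Adj (φ u).1 x))
    (k : ℕ) :
    (∃ c : V → Fin k, IsCFCN G c) ↔
      (∃ c' : {v : V | v ∉ Cs (Fin.last (d + 1))} → Fin k,
        IsCFCN (G.induce {v : V | v ∉ Cs (Fin.last (d + 1))}) c') := by
  classical
  set L : Fin (d + 2) := Fin.last (d + 1) with hLdef
  set s : Set V := {v : V | v ∉ Cs L} with hsdef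
  have hdisj : ∀ i j : Fin (d + 2), i ≠ j → ∀ v, v ∈ Cs i → v ∈ Cs j → False := by
    intro i j hij v hvi hvj
    have key : ∀ a b : Fin (d + 2), ∀ w, w ∈ Cs a → w ∈ Cs b → Cs a ⊆ Cs b := by
      intro a b w hwa hwb z hz
      by_cases hzw : z = w
      · exact hzw ▸ hwb
      · exact hCclosed b w hwb z (hCX a z hz) (hCclique a w hwa z hz (fun h => hzw h.symm))
    exact hdistinct i j hij (Finset.Subset.antisymm (key i j v hvi hvj) (key j i v hvj hvi))
  have hnbr : ∀ i : Fin (d + 2), ∀ v ∈ Cs i, ∀ z, G.Adj v z → z ∈ X ∨ z ∈ Cs i := by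
    intro i v hv z hadj
    by_cases hz : z ∈ X
    · exact Or.inl hz
    · exact Or.inr (hCclosed i v hv z hz hadj)
  have hXs : ∀ x ∈ X, x ∈ s := fun x hx hxL => hCX L x hxL hx
  have htype : ∀ i j : Fin (d + 2), ∃ φ : {v : V // v ∈ Cs i} ≃ {v : V // v ∈ Cs j},
      ∀ (u : {v : V // v ∈ Cs i}) (x : V), x ∈ X → (G.Adj u.1 x ↔ G.Adj (φ u).1 x) := by
    intro i j
    obtain ⟨φ, hφ⟩ := hsametype i j
    refine ⟨φ, fun u x hx => ?_⟩
    have h := Finset.ext_iff.mp (hφ u) x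
    simp only [Finset.mem_filter, hx, true_and] at h
    exact h
  constructor
  · -- from a coloring of G to a coloring of G'
    rintro ⟨c, hc⟩
    choose colW witW hwit1 hwit2 using fun x : {x // x ∈ X} => hc x.1
    obtain ⟨a, haL, hafree⟩ := aux_free_index X hX Cs hdisj witW
    have haS : ∀ z, z ∈ Cs a → z ∈ s := fun z hz hzL => hdisj a L haL z hz hzL
    obtain ⟨φ, hφ⟩ := htype a L
    set τ : s → V := fun z => if h : z.1 ∈ Cs a then (φ ⟨z.1, h⟩).1 else z.1 with hτdef
    have hτa : ∀ (z : s) (h : z.1 ∈ Cs a), τ z = (φ ⟨z.1, h⟩).1 := by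
      intro z h; simp only [hτdef, dif_pos h]
    have hτn : ∀ (z : s), z.1 ∉ Cs a → τ z = z.1 := by
      intro z h; simp only [hτdef, dif_neg h]
    refine ⟨fun z => c (τ z), ?_⟩
    intro v
    by_cases hva : v.1 ∈ Cs a
    · -- v lies in the clique Cs a; compare with (φ v) ∈ Cs L in G
      have huL : (φ ⟨v.1, hva⟩).1 ∈ Cs L := (φ ⟨v.1, hva⟩).2
      obtain ⟨b, w, hw, hwu⟩ := hc (φ ⟨v.1, hva⟩).1
      have hadjmap : ∀ z : s, ((G.induce s).Adj v z ∨ z = v) →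
          (G.Adj (φ ⟨v.1, hva⟩).1 (τ z) ∨ τ z = (φ ⟨v.1, hva⟩).1) := by
        intro z hz
        by_cases hza : z.1 ∈ Cs a
        · rw [hτa z hza]
          by_cases hzv : z = v
          · right; subst hzv; rfl
          · left
            have hne : (φ ⟨z.1, hza⟩).1 ≠ (φ ⟨v.1, hva⟩).1 := by
              intro h
              have h4 := Subtype.ext_iff.mp (φ.injective (Subtype.ext h) :
                (⟨z.1, hza⟩ : {x // x ∈ Cs a}) = ⟨v.1, hva⟩)
              exact hzv (Subtype.ext h4)
            exact hCclique L _ huL _ (φ ⟨z.1, hza⟩).2 (Ne.symm hne)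
        · rw [hτn z hza]
          have hzv : z ≠ v := fun h => hza (h ▸ hva)
          have hadj : G.Adj v.1 z.1 := by
            rcases hz with h | h
            · exact h
            · exact absurd h hzv
          have hzX : z.1 ∈ X := (hnbr a v.1 hva z.1 hadj).resolve_right hza
          exact Or.inl ((hφ ⟨v.1, hva⟩ z.1 hzX).mp hadj)
      have hwloc : w ∈ Cs L ∨ w ∈ X := by
        rcases hw.1 with h | h
        · exact (hnbr L _ huL w h).symm
        · exact Or.inl (h ▸ huL)
      rcases hwloc with hwL | hwX
      · refine cfcn_transfer τ b w (fun z hz => ⟨hadjmap z hz, rfl⟩) hw.2 hwu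
          ⟨(φ.symm ⟨w, hwL⟩).1, haS _ (φ.symm ⟨w, hwL⟩).2⟩ ?_ ?_ ?_
        · by_cases hwu' : w = (φ ⟨v.1, hva⟩).1
          · right
            apply Subtype.ext
            show (φ.symm ⟨w, hwL⟩).1 = v.1
            have h2 : (⟨w, hwL⟩ : {x // x ∈ Cs L}) = φ ⟨v.1, hva⟩ := Subtype.ext hwu'
            rw [h2, Equiv.symm_apply_apply]
          · left
            show G.Adj v.1 (φ.symm ⟨w, hwL⟩).1
            have hne : v.1 ≠ (φ.symm ⟨w, hwL⟩).1 := by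
              intro h
              apply hwu'
              have h2 : (⟨v.1, hva⟩ : {x // x ∈ Cs a}) = φ.symm ⟨w, hwL⟩ := Subtype.ext h
              have h3 := congrArg φ h2
              rw [Equiv.apply_symm_apply] at h3
              exact (Subtype.ext_iff.mp h3).symm
            exact hCclique a v.1 hva _ (φ.symm ⟨w, hwL⟩).2 hne
        · rw [hτa _ (φ.symm ⟨w, hwL⟩).2]
          show (φ (φ.symm ⟨w, hwL⟩)).1 = w
          rw [Equiv.apply_symm_apply]
        · intro z hz hτz
          by_cases hza : z.1 ∈ Cs a
          · rw [hτa z hza] at hτz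
            apply Subtype.ext
            show z.1 = (φ.symm ⟨w, hwL⟩).1
            have h2 : φ ⟨z.1, hza⟩ = ⟨w, hwL⟩ := Subtype.ext hτz
            rw [← h2, Equiv.symm_apply_apply]
          · rw [hτn z hza] at hτz
            exact absurd (by rw [hτz]; exact hwL) z.2
      · have hws : w ∈ s := hXs w hwX
        have hwa : w ∉ Cs a := fun h => hCX a w h hwX
        have hadjuw : G.Adj (φ ⟨v.1, hva⟩).1 w := by
          rcases hw.1 with h | h
          · exact h
          · exfalso; exact hCX L _ huL (h ▸ hwX)
        refine cfcn_transfer τ b w (fun z hz => ⟨hadjmap z hz, rfl⟩) hw.2 hwu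
          ⟨w, hws⟩ ?_ (hτn _ hwa) ?_
        · left
          show G.Adj v.1 w
          exact (hφ ⟨v.1, hva⟩ w hwX).mpr hadjuw
        · intro z hz hτz
          by_cases hza : z.1 ∈ Cs a
          · exfalso
            rw [hτa z hza] at hτz
            exact hCX L w (hτz ▸ (φ ⟨z.1, hza⟩).2) hwX
          · rw [hτn z hza] at hτz
            exact Subtype.ext hτz
    · by_cases hvX : v.1 ∈ X
      · have hadjmap : ∀ z : s, ((G.induce s).Adj v z ∨ z = v) →
            (G.Adj v.1 (τ z) ∨ τ z = v.1) := by
          intro z hz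
          by_cases hza : z.1 ∈ Cs a
          · have hzv : z ≠ v := fun h => hva (h ▸ hza)
            have hadj : G.Adj v.1 z.1 := by
              rcases hz with h | h
              · exact h
              · exact absurd h hzv
            rw [hτa z hza]
            exact Or.inl ((hφ ⟨z.1, hza⟩ v.1 hvX).mp hadj.symm).symm
          · rw [hτn z hza]
            rcases hz with h | h
            · exact Or.inl h
            · exact Or.inr (Subtype.ext_iff.mp h)
        by_cases hwL : witW ⟨v.1, hvX⟩ ∈ Cs L
        · refine cfcn_transfer τ (colW ⟨v.1, hvX⟩) (witW ⟨v.1, hvX⟩)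
            (fun z hz => ⟨hadjmap z hz, rfl⟩) (hwit1 ⟨v.1, hvX⟩).2 (hwit2 ⟨v.1, hvX⟩)
            ⟨(φ.symm ⟨witW ⟨v.1, hvX⟩, hwL⟩).1, haS _ (φ.symm ⟨witW ⟨v.1, hvX⟩, hwL⟩).2⟩ ?_ ?_ ?_
          · left
            show G.Adj v.1 (φ.symm ⟨witW ⟨v.1, hvX⟩, hwL⟩).1
            have hadjvw : G.Adj v.1 (witW ⟨v.1, hvX⟩) := by
              rcases (hwit1 ⟨v.1, hvX⟩).1 with h | h
              · exact h
              · exfalso; exact hCX L v.1 (h ▸ hwL) hvX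
            have hiff := hφ (φ.symm ⟨witW ⟨v.1, hvX⟩, hwL⟩) v.1 hvX
            rw [Equiv.apply_symm_apply] at hiff
            exact (hiff.mpr hadjvw.symm).symm
          · rw [hτa _ (φ.symm ⟨witW ⟨v.1, hvX⟩, hwL⟩).2]
            show (φ (φ.symm ⟨witW ⟨v.1, hvX⟩, hwL⟩)).1 = witW ⟨v.1, hvX⟩
            rw [Equiv.apply_symm_apply]
          · intro z hz hτz
            by_cases hza : z.1 ∈ Cs a
            · rw [hτa z hza] at hτz
              apply Subtype.ext
              show z.1 = (φ.symm ⟨witW ⟨v.1, hvX⟩, hwL⟩).1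
              have h2 : φ ⟨z.1, hza⟩ = ⟨witW ⟨v.1, hvX⟩, hwL⟩ := Subtype.ext hτz
              rw [← h2, Equiv.symm_apply_apply]
            · rw [hτn z hza] at hτz
              exact absurd (by rw [hτz]; exact hwL) z.2
        · have hwita : witW ⟨v.1, hvX⟩ ∉ Cs a := hafree ⟨v.1, hvX⟩
          refine cfcn_transfer τ (colW ⟨v.1, hvX⟩) (witW ⟨v.1, hvX⟩)
            (fun z hz => ⟨hadjmap z hz, rfl⟩) (hwit1 ⟨v.1, hvX⟩).2 (hwit2 ⟨v.1, hvX⟩)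
            ⟨witW ⟨v.1, hvX⟩, hwL⟩ ?_ (hτn _ hwita) ?_
          · rcases (hwit1 ⟨v.1, hvX⟩).1 with h | h
            · exact Or.inl h
            · exact Or.inr (Subtype.ext h)
          · intro z hz hτz
            by_cases hza : z.1 ∈ Cs a
            · exfalso
              rw [hτa z hza] at hτz
              exact hwL (hτz ▸ (φ ⟨z.1, hza⟩).2)
            · rw [hτn z hza] at hτz
              exact Subtype.ext hτz
      · obtain ⟨b, w, hw, hwu⟩ := hc v.1
        have hza' : ∀ z : s, ((G.induce s).Adj v z ∨ z = v) → z.1 ∉ Cs a := by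
          intro z hz hza
          rcases hz with h | h
          · have hadj : G.Adj v.1 z.1 := h
            rcases hnbr a z.1 hza v.1 hadj.symm with h1 | h1
            · exact hvX h1
            · exact hva h1
          · exact hva (h ▸ hza)
        have hadjmap : ∀ z : s, ((G.induce s).Adj v z ∨ z = v) →
            (G.Adj v.1 (τ z) ∨ τ z = v.1) := by
          intro z hz
          rw [hτn z (hza' z hz)]
          rcases hz with h | h
          · exact Or.inl h
          · exact Or.inr (Subtype.ext_iff.mp h)
        have hwv : w ∈ s ∧ w ∉ Cs a := by
          rcases hw.1 with h | h
          · constructor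
            · intro hwL
              rcases hnbr L w hwL v.1 h.symm with h1 | h1
              · exact hvX h1
              · exact v.2 h1
            · intro hwa
              rcases hnbr a w hwa v.1 h.symm with h1 | h1
              · exact hvX h1
              · exact hva h1
          · subst h
            exact ⟨v.2, hva⟩
        refine cfcn_transfer τ b w (fun z hz => ⟨hadjmap z hz, rfl⟩) hw.2 hwu
          ⟨w, hwv.1⟩ ?_ (hτn _ hwv.2) ?_
        · rcases hw.1 with h | h
          · exact Or.inl h
          · exact Or.inr (Subtype.ext h)
        · intro z hz hτz
          rw [hτn z (hza' z hz)] at hτz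
          exact Subtype.ext hτz
  · -- from a coloring of G' to a coloring of G
    rintro ⟨c', hc'⟩
    choose colW witW hwit1 hwit2 using fun x : {x // x ∈ X} => hc' ⟨x.1, hXs x.1 x.2⟩
    obtain ⟨a, haL, hafree⟩ := aux_free_index X hX Cs hdisj (fun x => (witW x).1)
    have haS : ∀ z, z ∈ Cs a → z ∈ s := fun z hz hzL => hdisj a L haL z hz hzL
    obtain ⟨φ, hφ⟩ := htype L a
    set τ : V → s := fun y => if h : y ∈ Cs L then ⟨(φ ⟨y, h⟩).1, haS _ (φ ⟨y, h⟩).2⟩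
      else ⟨y, h⟩ with hτdef
    have hτa : ∀ (y : V) (h : y ∈ Cs L), τ y = ⟨(φ ⟨y, h⟩).1, haS _ (φ ⟨y, h⟩).2⟩ := by
      intro y h; simp only [hτdef, dif_pos h]
    have hτn : ∀ (y : V) (h : y ∉ Cs L), τ y = ⟨y, h⟩ := by
      intro y h; simp only [hτdef, dif_neg h]
    refine ⟨fun y => c' (τ y), ?_⟩
    intro v
    by_cases hvL : v ∈ Cs L
    · -- v lies in the clique Cs L; compare with (φ v) ∈ Cs a in G'
      have hua : (φ ⟨v, hvL⟩).1 ∈ Cs a := (φ ⟨v, hvL⟩).2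
      obtain ⟨b, w, hw, hwu⟩ := hc' ⟨(φ ⟨v, hvL⟩).1, haS _ (φ ⟨v, hvL⟩).2⟩
      have hadjmap : ∀ z : V, (G.Adj v z ∨ z = v) →
          ((G.induce s).Adj ⟨(φ ⟨v, hvL⟩).1, haS _ (φ ⟨v, hvL⟩).2⟩ (τ z) ∨
            τ z = ⟨(φ ⟨v, hvL⟩).1, haS _ (φ ⟨v, hvL⟩).2⟩) := by
        intro z hz
        by_cases hzL : z ∈ Cs L
        · rw [hτa z hzL]
          by_cases hzv : z = v
          · right; subst hzv; rfl
          · left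
            show G.Adj (φ ⟨v, hvL⟩).1 (φ ⟨z, hzL⟩).1
            have hne : (φ ⟨v, hvL⟩).1 ≠ (φ ⟨z, hzL⟩).1 := by
              intro h
              exact hzv (Subtype.ext_iff.mp (φ.injective (Subtype.ext h))).symm
            exact hCclique a _ hua _ (φ ⟨z, hzL⟩).2 hne
        · have hzv : z ≠ v := fun h => hzL (h ▸ hvL)
          have hadj : G.Adj v z := by
            rcases hz with h | h
            · exact h
            · exact absurd h hzv
          have hzX : z ∈ X := (hnbr L v hvL z hadj).resolve_right hzL
          rw [hτn z hzL]
          left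
          show G.Adj (φ ⟨v, hvL⟩).1 z
          exact (hφ ⟨v, hvL⟩ z hzX).mp hadj
      have hwloc : w.1 ∈ Cs a ∨ w.1 ∈ X := by
        rcases hw.1 with h | h
        · have hadj : G.Adj (φ ⟨v, hvL⟩).1 w.1 := h
          exact (hnbr a _ hua w.1 hadj).symm
        · exact Or.inl (by rw [h]; exact hua)
      rcases hwloc with hwa | hwX
      · refine cfcn_transfer τ b w (fun z hz => ⟨hadjmap z hz, rfl⟩) hw.2 hwu
          (φ.symm ⟨w.1, hwa⟩).1 ?_ ?_ ?_
        · by_cases hwu' : w = ⟨(φ ⟨v, hvL⟩).1, haS _ (φ ⟨v, hvL⟩).2⟩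
          · right
            show (φ.symm ⟨w.1, hwa⟩).1 = v
            have h1 : w.1 = (φ ⟨v, hvL⟩).1 := Subtype.ext_iff.mp hwu'
            have h2 : (⟨w.1, hwa⟩ : {x // x ∈ Cs a}) = φ ⟨v, hvL⟩ := Subtype.ext h1
            rw [h2, Equiv.symm_apply_apply]
          · left
            have hne : v ≠ (φ.symm ⟨w.1, hwa⟩).1 := by
              intro h
              apply hwu'
              have h2 : (⟨v, hvL⟩ : {x // x ∈ Cs L}) = φ.symm ⟨w.1, hwa⟩ := Subtype.ext h
              have h3 := congrArg φ h2
              rw [Equiv.apply_symm_apply] at h3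
              exact Subtype.ext (Subtype.ext_iff.mp h3).symm
            exact hCclique L v hvL _ (φ.symm ⟨w.1, hwa⟩).2 hne
        · rw [hτa _ (φ.symm ⟨w.1, hwa⟩).2]
          apply Subtype.ext
          show (φ (φ.symm ⟨w.1, hwa⟩)).1 = w.1
          rw [Equiv.apply_symm_apply]
        · intro z hz hτz
          by_cases hzL : z ∈ Cs L
          · rw [hτa z hzL] at hτz
            have h1 : (φ ⟨z, hzL⟩).1 = w.1 := Subtype.ext_iff.mp hτz
            have h2 : φ ⟨z, hzL⟩ = ⟨w.1, hwa⟩ := Subtype.ext h1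
            show z = (φ.symm ⟨w.1, hwa⟩).1
            rw [← h2, Equiv.symm_apply_apply]
          · rw [hτn z hzL] at hτz
            exfalso
            have hzw : z = w.1 := Subtype.ext_iff.mp hτz
            rcases hz with h | h
            · rcases hnbr L v hvL z h with h1 | h1
              · exact hCX a z (hzw ▸ hwa) h1
              · exact hzL h1
            · exact hzL (h ▸ hvL)
      · refine cfcn_transfer τ b w (fun z hz => ⟨hadjmap z hz, rfl⟩) hw.2 hwu
          w.1 ?_ ?_ ?_
        · left
          have hadjuw : G.Adj (φ ⟨v, hvL⟩).1 w.1 := by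
            rcases hw.1 with h | h
            · exact h
            · exfalso
              exact hCX a _ hua ((Subtype.ext_iff.mp h) ▸ hwX)
          exact (hφ ⟨v, hvL⟩ w.1 hwX).mpr hadjuw
        · rw [hτn w.1 w.2]
        · intro z hz hτz
          by_cases hzL : z ∈ Cs L
          · exfalso
            rw [hτa z hzL] at hτz
            have h2 : (φ ⟨z, hzL⟩).1 = w.1 := Subtype.ext_iff.mp hτz
            exact hCX a w.1 (h2 ▸ (φ ⟨z, hzL⟩).2) hwX
          · rw [hτn z hzL] at hτz
            exact Subtype.ext_iff.mp hτz
    · by_cases hvX : v ∈ X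
      · have hadjmap : ∀ z : V, (G.Adj v z ∨ z = v) →
            ((G.induce s).Adj ⟨v, hXs v hvX⟩ (τ z) ∨ τ z = ⟨v, hXs v hvX⟩) := by
          intro z hz
          by_cases hzL : z ∈ Cs L
          · have hzv : z ≠ v := fun h => hvL (h ▸ hzL)
            have hadj : G.Adj v z := by
              rcases hz with h | h
              · exact h
              · exact absurd h hzv
            rw [hτa z hzL]
            left
            show G.Adj v (φ ⟨z, hzL⟩).1
            exact ((hφ ⟨z, hzL⟩ v hvX).mp hadj.symm).symm
          · rw [hτn z hzL]
            rcases hz with h | h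
            · exact Or.inl h
            · exact Or.inr (Subtype.ext h)
        have hwa : (witW ⟨v, hvX⟩).1 ∉ Cs a := hafree ⟨v, hvX⟩
        refine cfcn_transfer τ (colW ⟨v, hvX⟩) (witW ⟨v, hvX⟩)
          (fun z hz => ⟨hadjmap z hz, rfl⟩) (hwit1 ⟨v, hvX⟩).2 (hwit2 ⟨v, hvX⟩)
          (witW ⟨v, hvX⟩).1 ?_ ?_ ?_
        · rcases (hwit1 ⟨v, hvX⟩).1 with h | h
          · exact Or.inl h
          · exact Or.inr (Subtype.ext_iff.mp h)
        · rw [hτn (witW ⟨v, hvX⟩).1 (witW ⟨v, hvX⟩).2]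
        · intro z hz hτz
          by_cases hzL : z ∈ Cs L
          · exfalso
            rw [hτa z hzL] at hτz
            exact hwa ((Subtype.ext_iff.mp hτz) ▸ (φ ⟨z, hzL⟩).2)
          · rw [hτn z hzL] at hτz
            exact Subtype.ext_iff.mp hτz
      · have hvs : v ∈ s := hvL
        obtain ⟨b, w, hw, hwu⟩ := hc' ⟨v, hvs⟩
        have hzL' : ∀ z : V, (G.Adj v z ∨ z = v) → z ∉ Cs L := by
          intro z hz hzL
          rcases hz with h | h
          · rcases hnbr L z hzL v h.symm with h1 | h1
            · exact hvX h1
            · exact hvL h1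
          · exact hvL (h ▸ hzL)
        have hadjmap : ∀ z : V, (G.Adj v z ∨ z = v) →
            ((G.induce s).Adj ⟨v, hvs⟩ (τ z) ∨ τ z = ⟨v, hvs⟩) := by
          intro z hz
          rw [hτn z (hzL' z hz)]
          rcases hz with h | h
          · exact Or.inl h
          · exact Or.inr (Subtype.ext h)
        refine cfcn_transfer τ b w (fun z hz => ⟨hadjmap z hz, rfl⟩) hw.2 hwu
          w.1 ?_ ?_ ?_
        · rcases hw.1 with h | h
          · exact Or.inl h
          · exact Or.inr (Subtype.ext_iff.mp h)
        · rw [hτn w.1 w.2]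
        · intro z hz hτz
          rw [hτn z (hzL' z hz)] at hτz
          exact Subtype.ext_iff.mp hτz
end

section
/- Let G be a finite simple graph, X ⊆ V(G) with G \ X a cluster graph, let C be a connected component (a clique) of G \ X, let Y ⊆ X, and let T = {u ∈ C : N(u) ∩ X = Y}. Suppose |T| > 2k + 1 and let G' be the graph obtained from G by deleting all but 2k + 1 of the vertices of T. Then G admits a conflict-free open neighborhood coloring with k colors if and only if G' does. -/
/-- A coloring `c` is a conflict-free open neighborhood (CF-ON) coloring of `H` if
for every vertex `v` there is some color assigned to exactly one vertex of the
open neighborhood `N(v)`. -/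
def IsCFON {W S : Type*} (H : SimpleGraph W) (c : W → S) : Prop :=
  ∀ v : W, ∃ a : S, ∃! u : W, H.Adj v u ∧ c u = a

open Finset

lemma existsUnique_iff_card {V : Type*} [Fintype V] (P : V → Prop) [DecidablePred P] :
    (∃! u, P u) ↔ (Finset.univ.filter P).card = 1 := by
  rw [Finset.card_eq_one]
  constructor
  · rintro ⟨a, ha, hu⟩
    refine ⟨a, ?_⟩
    ext x
    simp only [Finset.mem_filter, Finset.mem_univ, true_and, Finset.mem_singleton]
    refine ⟨fun h => hu x h, fun h => ?_⟩
    subst h; exact ha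
  · rintro ⟨a, ha⟩
    have h : ∀ x, P x ↔ x = a := by
      intro x
      constructor
      · intro hx
        have hx2 : x ∈ Finset.univ.filter P := by simp [hx]
        rw [ha] at hx2; simpa using hx2
      · intro hxa
        have hx2 := Finset.mem_singleton_self a
        rw [← ha] at hx2
        rw [hxa]
        simpa using hx2
    exact ⟨a, (h a).mpr rfl, fun x hx => (h x).mp hx⟩

lemma exists_fun_fiber_card {V : Type*} [DecidableEq V] {k : ℕ} (hk : 0 < k) :
    ∀ (n : ℕ) (S : Finset V) (m : Fin k → ℕ), S.card = n → (∑ b, m b) = n →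
      ∃ f : V → Fin k, ∀ b, (S.filter (fun v => f v = b)).card = m b := by
  intro n
  induction n with
  | zero =>
    intro S m hS hm
    refine ⟨fun _ => ⟨0, hk⟩, fun b => ?_⟩
    have hS0 : S = ∅ := Finset.card_eq_zero.mp hS
    have hm0 : m b = 0 := Finset.sum_eq_zero_iff.mp hm b (Finset.mem_univ b)
    simp [hS0, hm0]
  | succ n ih =>
    intro S m hS hm
    obtain ⟨s, hs⟩ := Finset.card_pos.mp (by omega : 0 < S.card)
    have hb : ∃ b, m b ≠ 0 := by
      by_contra h
      push_neg at h
      simp [h] at hm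
    obtain ⟨b, hbm⟩ := hb
    set m' : Fin k → ℕ := Function.update m b (m b - 1) with hm'
    have hsum' : (∑ b', m' b') = n := by
      rw [hm', Finset.sum_update_of_mem (Finset.mem_univ b)]
      have h2 : (∑ b' ∈ Finset.univ.erase b, m b') + m b = n + 1 := by
        rw [Finset.sum_erase_add _ _ (Finset.mem_univ b)]; exact hm
      have h3 : Finset.univ \ {b} = Finset.univ.erase b := by
        rw [Finset.erase_eq]
      rw [h3]
      omega
    have hcard' : (S.erase s).card = n := by
      rw [Finset.card_erase_of_mem hs, hS]
      omega
    obtain ⟨f, hf⟩ := ih (S.erase s) m' hcard' hsum'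
    refine ⟨Function.update f s b, fun b' => ?_⟩
    have hSins : S = insert s (S.erase s) := (Finset.insert_erase hs).symm
    have hagree : (S.erase s).filter (fun v => Function.update f s b v = b')
        = (S.erase s).filter (fun v => f v = b') := by
      apply Finset.filter_congr
      intro x hx
      rw [Function.update_of_ne (Finset.ne_of_mem_erase hx)]
    rw [hSins, Finset.filter_insert, Function.update_self]
    by_cases hbb : b = b'
    · rw [if_pos hbb, hagree, Finset.card_insert_of_notMem
        (fun hmem => Finset.notMem_erase s S (Finset.mem_of_mem_filter s hmem)), hf b', hm']
      subst hbb
      rw [Function.update_self]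
      omega
    · rw [if_neg hbb, hagree, hf b', hm', Function.update_of_ne (Ne.symm hbb)]

lemma card_filter_subtype {V : Type*} [Fintype V] [DecidableEq V] (D : Finset V)
    [Fintype {v : V | v ∉ D}] (P : V → Prop) [DecidablePred P]
    [DecidablePred (fun u : {v : V | v ∉ D} => P u.val)] :
    (Finset.univ.filter (fun u : {v : V | v ∉ D} => P u.val)).card
      = (Finset.univ.filter (fun u : V => u ∉ D ∧ P u)).card := by
  apply Finset.card_bij (fun (u : {v : V | v ∉ D}) _ => u.val)
  · intro u hu
    simp only [Finset.mem_filter, Finset.mem_univ, true_and] at hu ⊢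
    exact ⟨u.property, hu⟩
  · intro u₁ _ u₂ _ h
    exact Subtype.ext h
  · intro u hu
    simp only [Finset.mem_filter, Finset.mem_univ, true_and] at hu
    exact ⟨⟨u, hu.1⟩, by simp [hu.2], rfl⟩

/-- Reduction rule for CF-ON coloring: if `G \ X` is a cluster graph, `C` is a
connected component (a clique) of `G \ X`, `Y ⊆ X`, and the type class
`T = {u ∈ C : N(u) ∩ X = Y}` has more than `2k + 1` vertices, then deleting all but
`2k + 1` vertices of `T` (the deleted set is `D`) preserves CF-ON `k`-colorability. -/
theorem cfon_reduction_type_class {V : Type*} [Fintype V] [DecidableEq V]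
    (G : SimpleGraph V) [DecidableRel G.Adj] (X : Finset V)
    (hcluster : ∀ u v w : V, u ∉ X → v ∉ X → w ∉ X →
      G.Adj u v → G.Adj v w → u ≠ w → G.Adj u w)
    (C : Finset V)
    (hCX : ∀ v ∈ C, v ∉ X)
    (hCne : C.Nonempty)
    (hCclique : ∀ u ∈ C, ∀ v ∈ C, u ≠ v → G.Adj u v)
    (hCclosed : ∀ u ∈ C, ∀ v : V, v ∉ X → G.Adj u v → v ∈ C)
    (Y : Finset V) (hY : Y ⊆ X) (k : ℕ)
    (T : Finset V) (hT : T = C.filter (fun u => X.filter (fun x => G.Adj u x) = Y))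
    (hTbig : 2 * k + 1 < T.card)
    (D : Finset V) (hD : D ⊆ T) (hrest : (T \ D).card = 2 * k + 1) :
    (∃ c : V → Fin k, IsCFON G c) ↔
      (∃ c' : {v : V | v ∉ D} → Fin k, IsCFON (G.induce {v : V | v ∉ D}) c') := by
  classical
  -- basic structural facts
  have hTsub : T ⊆ C := by rw [hT]; exact Finset.filter_subset _ _
  have hTfil : ∀ u ∈ T, X.filter (fun x => G.Adj u x) = Y := by
    intro u hu; rw [hT] at hu; exact (Finset.mem_filter.mp hu).2
  have hTX : ∀ u ∈ T, u ∉ X := fun u hu => hCX u (hTsub hu)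
  have hYT : ∀ w ∈ Y, w ∉ T := fun w hw hwT => hTX w hwT (hY hw)
  have hYC : ∀ w ∈ Y, w ∉ C := fun w hw hwC => hCX w hwC (hY hw)
  have hadjT : ∀ u ∈ T, ∀ w, G.Adj u w ↔ (w ∈ C ∧ w ≠ u) ∨ w ∈ Y := by
    intro u hu w
    have huC : u ∈ C := hTsub hu
    have hufil : X.filter (fun x => G.Adj u x) = Y := hTfil u hu
    constructor
    · intro hadj
      by_cases hwX : w ∈ X
      · right; rw [← hufil]; exact Finset.mem_filter.mpr ⟨hwX, hadj⟩
      · left; exact ⟨hCclosed u huC w hwX hadj, hadj.ne'⟩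
    · rintro (⟨hwC, hwu⟩ | hwY)
      · exact hCclique u huC w hwC (Ne.symm hwu)
      · exact (Finset.mem_filter.mp (hufil ▸ hwY)).2
  -- adjacency from a vertex of `C ∪ Y` to a vertex of `T`
  have hiff : ∀ v, (v ∈ C ∨ v ∈ Y) → ∀ u ∈ T, (G.Adj v u ↔ u ≠ v) := by
    intro v hv u hu
    constructor
    · intro h; exact h.ne'
    · intro hne
      have : G.Adj u v := by
        rcases hv with hvC | hvY
        · exact (hadjT u hu v).mpr (Or.inl ⟨hvC, Ne.symm hne⟩)
        · exact (hadjT u hu v).mpr (Or.inr hvY)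
      exact this.symm
  -- a vertex outside `C ∪ Y` has no neighbors in `T`
  have hno : ∀ v, v ∉ C → v ∉ Y → ∀ u ∈ T, ¬ G.Adj v u := by
    intro v hvC hvY u hu hadj
    rcases (hadjT u hu v).mp hadj.symm with ⟨h, _⟩ | h
    · exact hvC h
    · exact hvY h
  -- count decomposition, unrestricted graph
  have hsplit : ∀ (e : V → Fin k) (v : V), (v ∈ C ∨ v ∈ Y) → ∀ b,
      (univ.filter fun u => G.Adj v u ∧ e u = b).card
        = ((T.erase v).filter fun u => e u = b).card
          + (univ.filter fun u => G.Adj v u ∧ u ∉ T ∧ e u = b).card := by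
    intro e v hv b
    have hun : univ.filter (fun u => G.Adj v u ∧ e u = b)
        = ((T.erase v).filter fun u => e u = b)
          ∪ (univ.filter fun u => G.Adj v u ∧ u ∉ T ∧ e u = b) := by
      ext u
      simp only [Finset.mem_filter, Finset.mem_univ, true_and, Finset.mem_union,
        Finset.mem_erase]
      constructor
      · rintro ⟨hadj, hce⟩
        by_cases huT : u ∈ T
        · exact Or.inl ⟨⟨hadj.ne', huT⟩, hce⟩
        · exact Or.inr ⟨hadj, huT, hce⟩
      · rintro (⟨⟨hne, huT⟩, hce⟩ | ⟨hadj, _, hce⟩)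
        · exact ⟨(hiff v hv u huT).mpr hne, hce⟩
        · exact ⟨hadj, hce⟩
    rw [hun, Finset.card_union_of_disjoint]
    rw [Finset.disjoint_left]
    intro u hu1 hu2
    have h1 : u ∈ T := Finset.mem_of_mem_erase (Finset.mem_of_mem_filter u hu1)
    have h2 := (Finset.mem_filter.mp hu2).2.2.1
    exact h2 h1
  -- count decomposition, restricted graph
  have hsplit' : ∀ (e : V → Fin k) (v : V), (v ∈ C ∨ v ∈ Y) → ∀ b,
      (univ.filter fun u => u ∉ D ∧ G.Adj v u ∧ e u = b).card
        = (((T \ D).erase v).filter fun u => e u = b).card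
          + (univ.filter fun u => G.Adj v u ∧ u ∉ T ∧ e u = b).card := by
    intro e v hv b
    have hun : univ.filter (fun u => u ∉ D ∧ G.Adj v u ∧ e u = b)
        = (((T \ D).erase v).filter fun u => e u = b)
          ∪ (univ.filter fun u => G.Adj v u ∧ u ∉ T ∧ e u = b) := by
      ext u
      simp only [Finset.mem_filter, Finset.mem_univ, true_and, Finset.mem_union,
        Finset.mem_erase, Finset.mem_sdiff]
      constructor
      · rintro ⟨huD, hadj, hce⟩
        by_cases huT : u ∈ T
        · exact Or.inl ⟨⟨hadj.ne', huT, huD⟩, hce⟩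
        · exact Or.inr ⟨hadj, huT, hce⟩
      · rintro (⟨⟨hne, huT, huD⟩, hce⟩ | ⟨hadj, huT, hce⟩)
        · exact ⟨huD, (hiff v hv u huT).mpr hne, hce⟩
        · exact ⟨fun h => huT (hD h), hadj, hce⟩
    rw [hun, Finset.card_union_of_disjoint]
    rw [Finset.disjoint_left]
    intro u hu1 hu2
    have h1 : u ∈ T := (Finset.mem_sdiff.mp
      (Finset.mem_of_mem_erase (Finset.mem_of_mem_filter u hu1))).1
    exact (Finset.mem_filter.mp hu2).2.2.1 h1
  -- for a vertex outside `C ∪ Y`, the restriction is invisible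
  have hout : ∀ (e : V → Fin k) (v : V), v ∉ C → v ∉ Y → ∀ b,
      (univ.filter fun u => u ∉ D ∧ G.Adj v u ∧ e u = b)
        = (univ.filter fun u => G.Adj v u ∧ e u = b) := by
    intro e v hvC hvY b
    ext u
    simp only [Finset.mem_filter, Finset.mem_univ, true_and]
    constructor
    · rintro ⟨_, h⟩; exact h
    · rintro ⟨hadj, hce⟩
      refine ⟨fun huD => ?_, hadj, hce⟩
      exact hno v hvC hvY u (hD huD) hadj
  -- for a vertex of `T`, the non-`T` part of the neighborhood is `(C \ T) ∪ Y`
  have hBpart : ∀ (e : V → Fin k) (v : V), v ∈ T → ∀ b,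
      (univ.filter fun u => G.Adj v u ∧ u ∉ T ∧ e u = b)
        = (((C \ T) ∪ Y).filter fun u => e u = b) := by
    intro e v hvT b
    ext u
    simp only [Finset.mem_filter, Finset.mem_univ, true_and, Finset.mem_union,
      Finset.mem_sdiff]
    constructor
    · rintro ⟨hadj, huT, hce⟩
      rcases (hadjT v hvT u).mp hadj with ⟨huC, _⟩ | huY
      · exact ⟨Or.inl ⟨huC, huT⟩, hce⟩
      · exact ⟨Or.inr huY, hce⟩
    · rintro ⟨(⟨huC, huT⟩ | huY), hce⟩
      · exact ⟨(hadjT v hvT u).mpr (Or.inl ⟨huC, fun h => huT (h ▸ hvT)⟩), huT, hce⟩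
      · exact ⟨(hadjT v hvT u).mpr (Or.inr huY), hYT u huY, hce⟩
  haveI : Fintype {v : V | v ∉ D} := Fintype.ofFinite _
  rcases Nat.eq_zero_or_pos k with hk0 | hk
  · -- trivial case `k = 0`: both sides are false
    subst hk0
    constructor
    · rintro ⟨c, -⟩
      exact (c hCne.choose).elim0
    · rintro ⟨c', -⟩
      obtain ⟨v, hv⟩ := Finset.card_pos.mp (by rw [hrest]; omega : 0 < (T \ D).card)
      exact (c' ⟨v, (Finset.mem_sdiff.mp hv).2⟩).elim0
  constructor
  · -- forward direction
    rintro ⟨c, hc⟩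
    have hcrit : ∀ v, ∃ b, (univ.filter fun u => G.Adj v u ∧ c u = b).card = 1 := by
      intro v
      obtain ⟨b, hb⟩ := hc v
      exact ⟨b, (existsUnique_iff_card _).mp hb⟩
    set n : Fin k → ℕ := fun b => (T.filter fun u => c u = b).card with hn_def
    have hn_app : ∀ b, (T.filter fun u => c u = b).card = n b := fun b => by rw [hn_def]
    have hsum_n : ∑ b, n b = T.card :=
      (Finset.card_eq_sum_card_fiberwise (fun u _ => Finset.mem_univ (c u))).symm
    -- there is a color with at least 3 occurrences on `T`
    obtain ⟨m, hsum_m, hmn, hmpos⟩ : ∃ m : Fin k → ℕ, (∑ b, m b) = 2 * k + 1 ∧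
        (∀ b, n b ≤ 2 → m b = n b) ∧ (∀ b, 0 < m b → 0 < n b) := by
      have hb₀ : ∃ b₀, ¬ n b₀ ≤ 2 := by
        by_contra h
        push_neg at h
        have : ∑ b, n b ≤ ∑ _b : Fin k, 2 :=
          Finset.sum_le_sum (fun b _ => by have := h b; omega)
        rw [hsum_n] at this
        simp only [Finset.sum_const, Finset.card_univ, Fintype.card_fin, smul_eq_mul] at this
        omega
      obtain ⟨b₀, hb₀⟩ := hb₀
      set S₂ : ℕ := ∑ b ∈ univ.filter (fun b => n b ≤ 2), n b with hS₂def
      have hS₂ : S₂ ≤ 2 * k := by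
        have h1 : S₂ ≤ ∑ _b ∈ univ.filter (fun b : Fin k => n b ≤ 2), 2 :=
          Finset.sum_le_sum (fun b hb => (Finset.mem_filter.mp hb).2)
        have h2 : (univ.filter (fun b : Fin k => n b ≤ 2)).card ≤ k := by
          calc (univ.filter (fun b : Fin k => n b ≤ 2)).card ≤ univ.card :=
                Finset.card_filter_le _ _
            _ = k := by simp
        rw [Finset.sum_const, smul_eq_mul] at h1
        omega
      refine ⟨fun b => if n b ≤ 2 then n b else if b = b₀ then 2 * k + 1 - S₂ else 0,
        ?_, fun b h => if_pos h, fun b h => ?_⟩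
      · rw [← Finset.sum_filter_add_sum_filter_not univ (fun b => n b ≤ 2)]
        have h1 : ∑ b ∈ univ.filter (fun b => n b ≤ 2),
            (if n b ≤ 2 then n b else if b = b₀ then 2 * k + 1 - S₂ else 0) = S₂ :=
          Finset.sum_congr rfl (fun b hb => if_pos (Finset.mem_filter.mp hb).2)
        have h2 : ∑ b ∈ univ.filter (fun b => ¬ n b ≤ 2),
            (if n b ≤ 2 then n b else if b = b₀ then 2 * k + 1 - S₂ else 0)
              = 2 * k + 1 - S₂ := by
          rw [Finset.sum_congr rfl
            (fun b hb => if_neg (Finset.mem_filter.mp hb).2 :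
              ∀ b ∈ univ.filter (fun b => ¬ n b ≤ 2),
                (if n b ≤ 2 then n b else if b = b₀ then 2 * k + 1 - S₂ else 0)
                  = if b = b₀ then 2 * k + 1 - S₂ else 0)]
          rw [Finset.sum_ite_eq' (univ.filter (fun b => ¬ n b ≤ 2)) b₀
            (fun _ => 2 * k + 1 - S₂)]
          rw [if_pos (Finset.mem_filter.mpr ⟨Finset.mem_univ b₀, hb₀⟩)]
        rw [h1, h2]
        omega
      · by_cases hb2 : n b ≤ 2
        · simpa [hb2] using h
        · omega
    obtain ⟨f, hf⟩ := exists_fun_fiber_card hk (2 * k + 1) (T \ D) m hrest hsum_m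
    set c₁ : V → Fin k := fun v => if v ∈ T \ D then f v else c v with hc₁def
    have hc₁in : ∀ v ∈ T \ D, c₁ v = f v := by
      intro v hv; simp only [hc₁def]; rw [if_pos hv]
    have hc₁out : ∀ v, v ∉ T \ D → c₁ v = c v := by
      intro v hv; simp only [hc₁def]; rw [if_neg hv]
    have hfc : ∀ b, ((T \ D).filter fun u => c₁ u = b).card = m b := by
      intro b
      rw [Finset.filter_congr (fun u hu => by rw [hc₁in u hu] : ∀ u ∈ T \ D,
        (c₁ u = b) ↔ (f u = b))]
      exact hf b
    -- the non-`T` part is unchanged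
    have hNT : ∀ v b, (univ.filter fun u => G.Adj v u ∧ u ∉ T ∧ c₁ u = b)
        = (univ.filter fun u => G.Adj v u ∧ u ∉ T ∧ c u = b) := by
      intro v b
      apply Finset.filter_congr
      intro u _
      by_cases huT : u ∈ T
      · simp [huT]
      · rw [hc₁out u (fun h => huT (Finset.mem_sdiff.mp h).1)]
    refine ⟨fun u => c₁ u.val, ?_⟩
    rintro ⟨v, hv⟩
    have hvD : v ∉ D := hv
    have hconv : ∀ b, (univ.filter fun u : V => u ∉ D ∧ G.Adj v u ∧ c₁ u = b).card = 1 →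
        ∃! u : {v : V | v ∉ D}, (G.induce {v : V | v ∉ D}).Adj ⟨v, hv⟩ u ∧ c₁ u.val = b := by
      intro b h
      rw [existsUnique_iff_card]
      rw [show (univ.filter fun u : {v : V | v ∉ D} =>
          (G.induce {v : V | v ∉ D}).Adj ⟨v, hv⟩ u ∧ c₁ u.val = b)
        = (univ.filter fun u : {v : V | v ∉ D} => G.Adj v u.val ∧ c₁ u.val = b) from
        Finset.filter_congr (fun u _ => by simp [SimpleGraph.comap_adj])]
      rw [card_filter_subtype D (fun u => G.Adj v u ∧ c₁ u = b)]
      exact h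
    by_cases hvT' : v ∈ T \ D
    · -- `v` is a kept vertex of the type class
      have hvT : v ∈ T := (Finset.mem_sdiff.mp hvT').1
      have hm0 : 0 < m (f v) := by
        rw [← hf (f v)]
        exact Finset.card_pos.mpr ⟨v, Finset.mem_filter.mpr ⟨hvT', rfl⟩⟩
      obtain ⟨u, hu⟩ := Finset.card_pos.mp (hmpos _ hm0)
      have huT : u ∈ T := Finset.mem_of_mem_filter u hu
      have hcu : c u = f v := (Finset.mem_filter.mp hu).2
      obtain ⟨b, hb⟩ := hcrit u
      rw [hsplit c u (Or.inl (hTsub huT)) b, hBpart c u huT b] at hb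
      refine ⟨b, hconv b ?_⟩
      rw [hsplit' c₁ v (Or.inl (hTsub hvT)) b, hNT v b, hBpart c v hvT b]
      rw [Finset.filter_erase] at hb
      rw [Finset.filter_erase]
      by_cases hbb : f v = b
      · have hcub : c u = b := hcu.trans hbb
        have hmemu : u ∈ T.filter (fun w => c w = b) :=
          Finset.mem_filter.mpr ⟨huT, hcub⟩
        rw [Finset.card_erase_of_mem hmemu] at hb
        have hnb1 : 1 ≤ n b := Finset.card_pos.mpr ⟨u, hmemu⟩
        have hc₁v : c₁ v = b := (hc₁in v hvT').trans hbb
        have hmemv : v ∈ (T \ D).filter (fun w => c₁ w = b) :=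
          Finset.mem_filter.mpr ⟨hvT', hc₁v⟩
        rw [Finset.card_erase_of_mem hmemv, hfc b]
        rw [hn_app b] at hb
        have hnb2 : n b ≤ 2 := by omega
        rw [hmn b hnb2]
        omega
      · have hcub : c u ≠ b := fun h => hbb (hcu.symm.trans h)
        have hmemu : u ∉ T.filter (fun w => c w = b) :=
          fun h => hcub (Finset.mem_filter.mp h).2
        rw [Finset.erase_eq_of_notMem hmemu] at hb
        have hc₁v : c₁ v ≠ b := fun h => hbb ((hc₁in v hvT').symm.trans h)
        have hmemv : v ∉ (T \ D).filter (fun w => c₁ w = b) :=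
          fun h => hc₁v (Finset.mem_filter.mp h).2
        rw [Finset.erase_eq_of_notMem hmemv, hfc b]
        rw [hn_app b] at hb
        have hnb : n b ≤ 1 := by omega
        rw [hmn b (by omega)]
        omega
    · by_cases hvCY : v ∈ C ∨ v ∈ Y
      · -- `v` sees all of `T`, and `v ∉ T`
        have hvT : v ∉ T := fun h => hvT' (Finset.mem_sdiff.mpr ⟨h, hvD⟩)
        obtain ⟨b, hb⟩ := hcrit v
        rw [hsplit c v hvCY b, Finset.erase_eq_of_notMem hvT] at hb
        refine ⟨b, hconv b ?_⟩
        rw [hsplit' c₁ v hvCY b, hNT v b,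
          Finset.erase_eq_of_notMem (fun h => hvT (Finset.mem_sdiff.mp h).1), hfc b]
        rw [hn_app b] at hb
        have hnb : n b ≤ 1 := by omega
        rw [hmn b (by omega)]
        omega
      · -- `v` sees nothing of `T`
        push_neg at hvCY
        obtain ⟨b, hb⟩ := hcrit v
        refine ⟨b, hconv b ?_⟩
        rw [hout c₁ v hvCY.1 hvCY.2 b]
        rw [show (univ.filter fun u => G.Adj v u ∧ c₁ u = b)
            = (univ.filter fun u => G.Adj v u ∧ c u = b) from ?_]
        · exact hb
        · apply Finset.filter_congr
          intro u _
          by_cases hadj : G.Adj v u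
          · have huT : u ∉ T := fun h => hno v hvCY.1 hvCY.2 u h hadj
            rw [hc₁out u (fun h => huT (Finset.mem_sdiff.mp h).1)]
          · simp [hadj]
  · -- backward direction
    rintro ⟨c', hc'⟩
    set c₀ : V → Fin k := fun v => if h : v ∈ D then ⟨0, hk⟩ else c' ⟨v, h⟩ with hc₀def
    have hmap : ∀ u ∈ T \ D, c₀ u ∈ (univ : Finset (Fin k)) := fun _ _ => Finset.mem_univ _
    have hcardlt : (univ : Finset (Fin k)).card * 2 < (T \ D).card := by
      rw [hrest]
      simp only [Finset.card_univ, Fintype.card_fin]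
      omega
    obtain ⟨a, -, ha⟩ := Finset.exists_lt_card_fiber_of_mul_lt_card_of_maps_to hmap hcardlt
    set c₂ : V → Fin k := fun v => if v ∈ D then a else c₀ v with hc₂def
    have hc₂D : ∀ v ∈ D, c₂ v = a := by
      intro v hv; simp only [hc₂def]; rw [if_pos hv]
    have hc₂c' : ∀ (u : V) (h : u ∉ D), c₂ u = c' ⟨u, h⟩ := by
      intro u h
      simp only [hc₂def, hc₀def]
      rw [if_neg h, dif_neg h]
    have ha2 : 2 < ((T \ D).filter fun u => c₂ u = a).card := by
      rw [Finset.filter_congr (fun u hu => by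
        rw [hc₂c' u (Finset.mem_sdiff.mp hu).2, ← hc₂c' u (Finset.mem_sdiff.mp hu).2]
        simp only [hc₂def]
        rw [if_neg (Finset.mem_sdiff.mp hu).2] :
          ∀ u ∈ T \ D, (c₂ u = a) ↔ (c₀ u = a))]
      exact ha
    have hcrit' : ∀ (v : V), v ∉ D → ∃ b,
        (univ.filter fun u : V => u ∉ D ∧ G.Adj v u ∧ c₂ u = b).card = 1 := by
      intro v hv
      obtain ⟨b, hb⟩ := hc' ⟨v, hv⟩
      refine ⟨b, ?_⟩
      rw [existsUnique_iff_card] at hb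
      rw [← card_filter_subtype D (fun u => G.Adj v u ∧ c₂ u = b)]
      rw [show (univ.filter fun u : {v : V | v ∉ D} => G.Adj v u.val ∧ c₂ u.val = b)
        = (univ.filter fun u : {v : V | v ∉ D} =>
            (G.induce {v : V | v ∉ D}).Adj ⟨v, hv⟩ u ∧ c' u = b) from
        Finset.filter_congr (fun u _ => by
          rw [hc₂c' u.val u.property, Subtype.coe_eta]
          simp [SimpleGraph.comap_adj])]
      exact hb
    have herase2 : ∀ w, 2 ≤ (((T \ D).erase w).filter fun u => c₂ u = a).card := by
      intro w
      rw [Finset.filter_erase]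
      by_cases hw : w ∈ (T \ D).filter fun u => c₂ u = a
      · rw [Finset.card_erase_of_mem hw]; omega
      · rw [Finset.erase_eq_of_notMem hw]; omega
    refine ⟨c₂, ?_⟩
    intro v
    by_cases hvD : v ∈ D
    · -- `v` is a deleted vertex
      have hvT : v ∈ T := hD hvD
      have hvC : v ∈ C := hTsub hvT
      obtain ⟨t, ht⟩ := Finset.card_pos.mp (by omega : 0 < ((T \ D).filter fun u =>
        c₂ u = a).card)
      have htT' : t ∈ T \ D := Finset.mem_of_mem_filter t ht
      have htT : t ∈ T := (Finset.mem_sdiff.mp htT').1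
      have htD : t ∉ D := (Finset.mem_sdiff.mp htT').2
      have hta : c₂ t = a := (Finset.mem_filter.mp ht).2
      obtain ⟨b, hb⟩ := hcrit' t htD
      rw [hsplit' c₂ t (Or.inl (hTsub htT)) b] at hb
      have hba : b ≠ a := by
        rintro rfl
        have := herase2 t
        omega
      refine ⟨b, ?_⟩
      rw [existsUnique_iff_card, hsplit c₂ v (Or.inl hvC) b]
      have hTpart : (T.erase v).filter (fun u => c₂ u = b)
          = ((T \ D).erase t).filter (fun u => c₂ u = b) := by
        ext u
        simp only [Finset.mem_filter, Finset.mem_erase, Finset.mem_sdiff]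
        constructor
        · rintro ⟨⟨huv, huT⟩, hce⟩
          have huD : u ∉ D := fun h => hba (hce.symm.trans (hc₂D u h))
          have hut : u ≠ t := fun h => hba (hce.symm.trans (h ▸ hta))
          exact ⟨⟨hut, huT, huD⟩, hce⟩
        · rintro ⟨⟨hut, huT, huD⟩, hce⟩
          exact ⟨⟨fun h => huD (h ▸ hvD), huT⟩, hce⟩
      rw [hTpart, hBpart c₂ v hvT b, ← hBpart c₂ t htT b]
      exact hb
    · obtain ⟨b, hb⟩ := hcrit' v hvD
      by_cases hvCY : v ∈ C ∨ v ∈ Y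
      · rw [hsplit' c₂ v hvCY b] at hb
        have hba : b ≠ a := by
          rintro rfl
          have := herase2 v
          omega
        refine ⟨b, ?_⟩
        rw [existsUnique_iff_card, hsplit c₂ v hvCY b]
        have hTpart : (T.erase v).filter (fun u => c₂ u = b)
            = ((T \ D).erase v).filter (fun u => c₂ u = b) := by
          ext u
          simp only [Finset.mem_filter, Finset.mem_erase, Finset.mem_sdiff]
          constructor
          · rintro ⟨⟨huv, huT⟩, hce⟩
            have huD : u ∉ D := fun h => hba (hce.symm.trans (hc₂D u h))
            exact ⟨⟨huv, huT, huD⟩, hce⟩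
          · rintro ⟨⟨huv, huT, huD⟩, hce⟩
            exact ⟨⟨huv, huT⟩, hce⟩
        rw [hTpart]
        exact hb
      · push_neg at hvCY
        refine ⟨b, ?_⟩
        rw [existsUnique_iff_card]
        rw [← hout c₂ v hvCY.1 hvCY.2 b]
        exact hb
end

section
/- Let G be a finite simple graph and X ⊆ V(G) with |X| = d such that G \ X is a cluster graph. Suppose C₁, …, C_{d+2} are d + 2 distinct connected components (cliques) of G \ X that pairwise have the same type vector: for every pair i, j there is a bijection φ between the vertex sets of C_i and C_j with N(u) ∩ X = N(φ(u)) ∩ X for every vertex u of C_i. Let G' be the graph obtained from G by deleting all vertices of C_{d+2}. Then G admits a conflict-free open neighborhood coloring with k colors if and only if G' does. -/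
/-- Pigeonhole: some non-last component avoids all the chosen vertices. -/
lemma cfon_pigeon {V : Type*} [DecidableEq V] (X : Finset V) (d : ℕ) (hX : X.card = d)
    (Cs : Fin (d + 2) → Finset V)
    (hdisj : ∀ i j : Fin (d + 2), i ≠ j → ∀ v, v ∈ Cs i → v ∉ Cs j)
    (f : V → V) :
    ∃ a : Fin (d + 2), a ≠ Fin.last (d + 1) ∧ ∀ x ∈ X, f x ∉ Cs a := by
  classical
  set S : Finset (Fin (d + 2)) :=
    X.biUnion (fun x => Finset.univ.filter (fun i => f x ∈ Cs i)) with hS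
  have hScard : S.card ≤ d := by
    calc S.card ≤ ∑ x ∈ X, (Finset.univ.filter (fun i => f x ∈ Cs i)).card :=
          Finset.card_biUnion_le
      _ ≤ ∑ _x ∈ X, 1 := by
          refine Finset.sum_le_sum (fun x _ => ?_)
          refine Finset.card_le_one.mpr (fun i hi j hj => ?_)
          simp only [Finset.mem_filter] at hi hj
          by_contra hij
          exact hdisj i j hij (f x) hi.2 hj.2
      _ = d := by simp [hX]
  have hT : S.card < (Finset.univ.erase (Fin.last (d + 1))).card := by
    rw [Finset.card_erase_of_mem (Finset.mem_univ _), Finset.card_univ]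
    simp only [Fintype.card_fin]
    omega
  have hns : ¬ (Finset.univ.erase (Fin.last (d + 1)) ⊆ S) := fun h =>
    absurd (Finset.card_le_card h) (not_le.mpr hT)
  obtain ⟨a, haT, haS⟩ := Finset.not_subset.1 hns
  refine ⟨a, Finset.ne_of_mem_erase haT, fun x hx hmem => ?_⟩
  exact haS (Finset.mem_biUnion.mpr ⟨x, hx, Finset.mem_filter.mpr ⟨Finset.mem_univ _, hmem⟩⟩)

/-- Reduction rule for CF-ON coloring: if `G \ X` is a cluster graph (with `|X| = d`)
and `C₁, …, C_{d+2}` are `d + 2` distinct connected components (cliques) of `G \ X`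
that pairwise have the same type vector (there is a bijection between their vertex
sets preserving the neighborhood inside `X`), then deleting all vertices of the last
component `C_{d+2}` preserves CF-ON `k`-colorability. -/
theorem cfon_reduction_mega_type {V : Type*} [Fintype V] [DecidableEq V]
    (G : SimpleGraph V) [DecidableRel G.Adj] (X : Finset V) (d : ℕ) (hX : X.card = d)
    (hcluster : ∀ u v w : V, u ∉ X → v ∉ X → w ∉ X →
      G.Adj u v → G.Adj v w → u ≠ w → G.Adj u w)
    (Cs : Fin (d + 2) → Finset V)
    (hCX : ∀ i, ∀ v ∈ Cs i, v ∉ X)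
    (hCne : ∀ i, (Cs i).Nonempty)
    (hCclique : ∀ i, ∀ u ∈ Cs i, ∀ v ∈ Cs i, u ≠ v → G.Adj u v)
    (hCclosed : ∀ i, ∀ u ∈ Cs i, ∀ v : V, v ∉ X → G.Adj u v → v ∈ Cs i)
    (hdistinct : ∀ i j : Fin (d + 2), i ≠ j → Cs i ≠ Cs j)
    (hsametype : ∀ i j : Fin (d + 2),
      ∃ φ : {v : V // v ∈ Cs i} ≃ {v : V // v ∈ Cs j},
        ∀ u : {v : V // v ∈ Cs i},
          X.filter (fun x => G.Adj u.1 x) = X.filter (fun x => G.Adj (φ u).1 x))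
    (k : ℕ) :
    (∃ c : V → Fin k, IsCFON G c) ↔
      (∃ c' : {v : V | v ∉ Cs (Fin.last (d + 1))} → Fin k,
        IsCFON (G.induce {v : V | v ∉ Cs (Fin.last (d + 1))}) c') := by
  classical
  set L : Fin (d + 2) := Fin.last (d + 1) with hLdef
  -- distinct components are disjoint
  have hsub : ∀ (p q : Fin (d + 2)) (w : V), w ∈ Cs p → w ∈ Cs q → Cs p ⊆ Cs q := by
    intro p q w hwp hwq z hz
    by_cases hzw : z = w
    · exact hzw ▸ hwq
    · exact hCclosed q w hwq z (hCX p z hz) (hCclique p w hwp z hz (Ne.symm hzw))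
  have hdisj : ∀ i j : Fin (d + 2), i ≠ j → ∀ v, v ∈ Cs i → v ∉ Cs j := by
    intro i j hij v hvi hvj
    exact hdistinct i j hij (Finset.Subset.antisymm (hsub i j v hvi hvj) (hsub j i v hvj hvi))
  -- a vertex of X is in no component
  have hXC : ∀ (i : Fin (d + 2)) (v : V), v ∈ X → v ∉ Cs i := fun i v hv h => hCX i v h hv
  -- neighbors of a component vertex are in the component or in X
  have hnbr : ∀ (i : Fin (d + 2)) (v u : V), v ∈ Cs i → G.Adj v u → u ∈ Cs i ∨ u ∈ X :=
    fun i v u hv hadj =>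
      if h : u ∈ X then Or.inr h else Or.inl (hCclosed i v hv u h hadj)
  -- a non-X vertex outside a component is not adjacent to it
  have hnadj : ∀ (i : Fin (d + 2)) (v u : V), v ∉ X → v ∉ Cs i → u ∈ Cs i → ¬ G.Adj v u :=
    fun i v u hvX hvC hu hadj => hvC (hCclosed i u hu v hvX hadj.symm)
  constructor
  · -- forward direction
    rintro ⟨c, hc⟩
    have hUex : ∀ v : V, ∃ u : V, G.Adj v u ∧ ∀ w, G.Adj v w → c w = c u → w = u := by
      intro v
      obtain ⟨a, u, ⟨hadj, hca⟩, huniq⟩ := hc v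
      exact ⟨u, hadj, fun w hw hcw => huniq w ⟨hw, hcw.trans hca⟩⟩
    choose U hUadj hUuniq using hUex
    obtain ⟨a, haL, haU⟩ := cfon_pigeon X d hX Cs hdisj U
    obtain ⟨φ, hφ⟩ := hsametype L a
    have hφX : ∀ (u : {v : V // v ∈ Cs L}) (x : V), x ∈ X →
        (G.Adj u.1 x ↔ G.Adj (φ u).1 x) := by
      intro u x hx
      have h1 := Finset.ext_iff.mp (hφ u) x
      simpa [Finset.mem_filter, hx] using h1
    set c₂ : V → Fin k := fun v =>
      if h : v ∈ Cs a then c (φ.symm ⟨v, h⟩).1 else c v with hc₂def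
    have hc₂a : ∀ (v : V) (h : v ∈ Cs a), c₂ v = c (φ.symm ⟨v, h⟩).1 := fun v h => dif_pos h
    have hc₂n : ∀ (v : V), v ∉ Cs a → c₂ v = c v := fun v h => dif_neg h
    refine ⟨fun v => c₂ v.1, ?_⟩
    rintro ⟨v, hvL⟩
    have hvL' : v ∉ Cs L := hvL
    by_cases hvX : v ∈ X
    · -- v ∈ X
      have huadj := hUadj v
      have huA : U v ∉ Cs a := haU v hvX
      by_cases huL : U v ∈ Cs L
      · -- the unique neighbor is in the deleted component: use its copy in Cs a
        set w : V := (φ ⟨U v, huL⟩).1 with hwdef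
        have hwA : w ∈ Cs a := (φ ⟨U v, huL⟩).2
        have hwL : w ∉ Cs L := hdisj a L haL w hwA
        have hadjw : G.Adj v w := ((hφX ⟨U v, huL⟩ v hvX).mp huadj.symm).symm
        have hcol : c₂ w = c (U v) := by
          rw [hc₂a w hwA]
          congr 1
          have : (⟨w, hwA⟩ : {x // x ∈ Cs a}) = φ ⟨U v, huL⟩ := rfl
          rw [this, Equiv.symm_apply_apply]
        refine ⟨c₂ w, ⟨w, hwL⟩, ⟨hadjw, rfl⟩, ?_⟩
        rintro ⟨w', hw'L⟩ ⟨hadj', hcol'⟩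
        have hadj'' : G.Adj v w' := hadj'
        have hw'L' : w' ∉ Cs L := hw'L
        apply Subtype.ext
        show w' = w
        by_cases hw'A : w' ∈ Cs a
        · set z := φ.symm ⟨w', hw'A⟩ with hzdef
          have hadjz : G.Adj v z.1 := by
            have := (hφX z v hvX)
            rw [show φ z = ⟨w', hw'A⟩ from Equiv.apply_symm_apply _ _] at this
            exact (this.mpr hadj''.symm).symm
          have hcz : c z.1 = c (U v) := by
            rw [← hc₂a w' hw'A]; exact hcol'.trans hcol
          have : z.1 = U v := hUuniq v z.1 hadjz hcz
          have hz' : z = ⟨U v, huL⟩ := Subtype.ext this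
          calc w' = (φ z).1 := by rw [show φ z = ⟨w', hw'A⟩ from Equiv.apply_symm_apply _ _]
            _ = w := by rw [hz']
        · have : c w' = c (U v) := by rw [← hc₂n w' hw'A]; exact hcol'.trans hcol
          have := hUuniq v w' hadj'' this
          exact absurd (this ▸ huL) hw'L'
      · -- the unique neighbor survives
        have hcol : c₂ (U v) = c (U v) := hc₂n _ huA
        refine ⟨c₂ (U v), ⟨U v, huL⟩, ⟨huadj, rfl⟩, ?_⟩
        rintro ⟨w', hw'L⟩ ⟨hadj', hcol'⟩
        have hadj'' : G.Adj v w' := hadj'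
        apply Subtype.ext
        show w' = U v
        by_cases hw'A : w' ∈ Cs a
        · set z := φ.symm ⟨w', hw'A⟩ with hzdef
          have hadjz : G.Adj v z.1 := by
            have := (hφX z v hvX)
            rw [show φ z = ⟨w', hw'A⟩ from Equiv.apply_symm_apply _ _] at this
            exact (this.mpr hadj''.symm).symm
          have hcz : c z.1 = c (U v) := by
            rw [← hc₂a w' hw'A]; exact hcol'.trans hcol
          have hzU : z.1 = U v := hUuniq v z.1 hadjz hcz
          exact absurd (hzU ▸ z.2) huL
        · have : c w' = c (U v) := by rw [← hc₂n w' hw'A]; exact hcol'.trans hcol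
          exact hUuniq v w' hadj'' this
    · -- v ∉ X
      by_cases hvA : v ∈ Cs a
      · -- v is in the component that gets recolored: mirror of its copy in Cs L
        set w₀ : {x // x ∈ Cs L} := φ.symm ⟨v, hvA⟩ with hw₀def
        have hφw₀ : φ w₀ = ⟨v, hvA⟩ := Equiv.apply_symm_apply _ _
        have huadj := hUadj w₀.1
        set u := U w₀.1 with hudef
        have huloc : u ∈ Cs L ∨ u ∈ X := hnbr L w₀.1 u w₀.2 huadj
        by_cases huX : u ∈ X
        · -- unique neighbor of the mirror vertex is in X
          have huL : u ∉ Cs L := hXC L u huX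
          have huA : u ∉ Cs a := hXC a u huX
          have hadju : G.Adj v u := by
            have := hφX w₀ u huX
            rw [hφw₀] at this
            exact this.mp huadj
          have hcol : c₂ u = c u := hc₂n _ huA
          refine ⟨c₂ u, ⟨u, huL⟩, ⟨hadju, rfl⟩, ?_⟩
          rintro ⟨w', hw'L⟩ ⟨hadj', hcol'⟩
          have hadj'' : G.Adj v w' := hadj'
          have hw'L' : w' ∉ Cs L := hw'L
          apply Subtype.ext
          show w' = u
          rcases hnbr a v w' hvA hadj'' with hw'A | hw'X
          · set z := φ.symm ⟨w', hw'A⟩ with hzdef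
            have hzv : w' ≠ v := hadj''.ne'
            have hzw₀ : z ≠ w₀ := by
              intro h
              apply hzv
              have : φ z = φ w₀ := by rw [h]
              rw [hφw₀, show φ z = ⟨w', hw'A⟩ from Equiv.apply_symm_apply _ _] at this
              exact congrArg Subtype.val this
            have hz1 : z.1 ≠ w₀.1 := fun h => hzw₀ (Subtype.ext h)
            have hadjz : G.Adj w₀.1 z.1 := hCclique L w₀.1 w₀.2 z.1 z.2 (Ne.symm hz1)
            have hcz : c z.1 = c u := by
              rw [← hc₂a w' hw'A]; exact hcol'.trans hcol
            have hzu := hUuniq w₀.1 z.1 hadjz hcz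
            have hmem : u ∈ Cs L := by rw [hudef, ← hzu]; exact z.2
            exact absurd hmem huL
          · have hadjw' : G.Adj w₀.1 w' := by
              have := hφX w₀ w' hw'X
              rw [hφw₀] at this
              exact this.mpr hadj''
            have : c w' = c u := by
              rw [← hc₂n w' (hXC a w' hw'X)]; exact hcol'.trans hcol
            exact hUuniq w₀.1 w' hadjw' this
        · -- unique neighbor of the mirror vertex is inside Cs L: use its copy in Cs a
          have huL : u ∈ Cs L := huloc.resolve_right huX
          set w : V := (φ ⟨u, huL⟩).1 with hwdef
          have hwA : w ∈ Cs a := (φ ⟨u, huL⟩).2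
          have hwL : w ∉ Cs L := hdisj a L haL w hwA
          have huw₀ : u ≠ w₀.1 := huadj.ne'
          have hwv : w ≠ v := by
            intro h
            apply huw₀
            have h2 : φ ⟨u, huL⟩ = φ w₀ := by
              rw [hφw₀]
              exact Subtype.ext h
            have := φ.injective h2
            exact congrArg Subtype.val this
          have hadjw : G.Adj v w := hCclique a v hvA w hwA (Ne.symm hwv)
          have hcol : c₂ w = c u := by
            rw [hc₂a w hwA]
            congr 1
            have : (⟨w, hwA⟩ : {x // x ∈ Cs a}) = φ ⟨u, huL⟩ := rfl
            rw [this, Equiv.symm_apply_apply]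
          refine ⟨c₂ w, ⟨w, hwL⟩, ⟨hadjw, rfl⟩, ?_⟩
          rintro ⟨w', hw'L⟩ ⟨hadj', hcol'⟩
          have hadj'' : G.Adj v w' := hadj'
          apply Subtype.ext
          show w' = w
          rcases hnbr a v w' hvA hadj'' with hw'A | hw'X
          · set z := φ.symm ⟨w', hw'A⟩ with hzdef
            have hφz : φ z = ⟨w', hw'A⟩ := Equiv.apply_symm_apply _ _
            have hzv : w' ≠ v := hadj''.ne'
            have hzw₀ : z ≠ w₀ := by
              intro h
              apply hzv
              have : φ z = φ w₀ := by rw [h]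
              rw [hφw₀, hφz] at this
              exact congrArg Subtype.val this
            have hz1 : z.1 ≠ w₀.1 := fun h => hzw₀ (Subtype.ext h)
            have hadjz : G.Adj w₀.1 z.1 := hCclique L w₀.1 w₀.2 z.1 z.2 (Ne.symm hz1)
            have hcz : c z.1 = c u := by
              rw [← hc₂a w' hw'A]; exact hcol'.trans hcol
            have hzu : z.1 = u := hUuniq w₀.1 z.1 hadjz hcz
            have : φ z = φ ⟨u, huL⟩ := by congr 1; exact Subtype.ext hzu
            rw [hφz] at this
            exact congrArg Subtype.val this
          · have hadjw' : G.Adj w₀.1 w' := by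
              have := hφX w₀ w' hw'X
              rw [hφw₀] at this
              exact this.mpr hadj''
            have : c w' = c u := by
              rw [← hc₂n w' (hXC a w' hw'X)]; exact hcol'.trans hcol
            have := hUuniq w₀.1 w' hadjw' this
            exact absurd (this ▸ huL) (hXC L w' hw'X)
      · -- v is not in X, Cs a, Cs L: nothing changes around v
        have huadj := hUadj v
        have huL : U v ∉ Cs L := fun h => hnadj L v (U v) hvX hvL' h huadj
        have huA : U v ∉ Cs a := fun h => hnadj a v (U v) hvX hvA h huadj
        refine ⟨c₂ (U v), ⟨U v, huL⟩, ⟨huadj, rfl⟩, ?_⟩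
        rintro ⟨w', hw'L⟩ ⟨hadj', hcol'⟩
        have hadj'' : G.Adj v w' := hadj'
        have hw'A : w' ∉ Cs a := fun h => hnadj a v w' hvX hvA h hadj''
        apply Subtype.ext
        show w' = U v
        have : c w' = c (U v) := by
          rw [← hc₂n w' hw'A, ← hc₂n (U v) huA]; exact hcol'
        exact hUuniq v w' hadj'' this
  · -- backward direction
    rintro ⟨c', hc'⟩
    have hUex : ∀ v : {v : V | v ∉ Cs L}, ∃ u : {v : V | v ∉ Cs L},
        G.Adj v.1 u.1 ∧ ∀ w : {v : V | v ∉ Cs L}, G.Adj v.1 w.1 → c' w = c' u → w = u := by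
      intro v
      obtain ⟨a, u, ⟨hadj, hca⟩, huniq⟩ := hc' v
      exact ⟨u, hadj, fun w hw hcw => huniq w ⟨hw, hcw.trans hca⟩⟩
    choose U' hU'adj hU'uniq using hUex
    set f : V → V := fun x =>
      if hx : x ∉ Cs L then (U' ⟨x, hx⟩).1 else x with hfdef
    obtain ⟨a, haL, haU⟩ := cfon_pigeon X d hX Cs hdisj f
    have haU' : ∀ (x : V) (hx : x ∈ X), (U' ⟨x, hXC L x hx⟩).1 ∉ Cs a := by
      intro x hx
      have h0 := haU x hx
      simp only [hfdef] at h0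
      rwa [dif_pos (hXC L x hx)] at h0
    obtain ⟨ψ, hψ⟩ := hsametype a L
    have hψX : ∀ (u : {v : V // v ∈ Cs a}) (x : V), x ∈ X →
        (G.Adj u.1 x ↔ G.Adj (ψ u).1 x) := by
      intro u x hx
      have h1 := Finset.ext_iff.mp (hψ u) x
      simpa [Finset.mem_filter, hx] using h1
    have hmemS : ∀ {x : V}, x ∉ Cs L → x ∈ {v : V | v ∉ Cs L} := fun h => h
    set c : V → Fin k := fun v =>
      if h : v ∈ Cs L then c' ⟨(ψ.symm ⟨v, h⟩).1, hdisj a L haL _ (ψ.symm ⟨v, h⟩).2⟩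
      else c' ⟨v, h⟩ with hcdef
    have hcL : ∀ (v : V) (h : v ∈ Cs L),
        c v = c' ⟨(ψ.symm ⟨v, h⟩).1, hdisj a L haL _ (ψ.symm ⟨v, h⟩).2⟩ := fun v h => dif_pos h
    have hcn : ∀ (v : V) (h : v ∉ Cs L), c v = c' ⟨v, h⟩ := fun v h => dif_neg h
    refine ⟨c, ?_⟩
    intro v
    by_cases hvL : v ∈ Cs L
    · -- v is in the deleted component: mirror via ψ.symm
      set z : {x // x ∈ Cs a} := ψ.symm ⟨v, hvL⟩ with hzdef
      have hψz : ψ z = ⟨v, hvL⟩ := Equiv.apply_symm_apply _ _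
      have hzL : z.1 ∉ Cs L := hdisj a L haL z.1 z.2
      set zS : {x : V | x ∉ Cs L} := ⟨z.1, hzL⟩ with hzSdef
      set u' := U' zS with hu'def
      have huadj : G.Adj z.1 u'.1 := hU'adj zS
      have hu'L : u'.1 ∉ Cs L := u'.2
      rcases hnbr a z.1 u'.1 z.2 huadj with hu'A | hu'X
      · -- unique neighbor of the mirror is inside Cs a: use its copy in Cs L
        set w₀ : V := (ψ ⟨u'.1, hu'A⟩).1 with hw₀def
        have hw₀L : w₀ ∈ Cs L := (ψ ⟨u'.1, hu'A⟩).2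
        have hu'z : u'.1 ≠ z.1 := huadj.ne'
        have hw₀v : w₀ ≠ v := by
          intro h
          apply hu'z
          have h2 : ψ ⟨u'.1, hu'A⟩ = ψ z := by rw [hψz]; exact Subtype.ext h
          exact congrArg Subtype.val (ψ.injective h2)
        have hadjw₀ : G.Adj v w₀ := hCclique L v hvL w₀ hw₀L (Ne.symm hw₀v)
        have hcolw₀ : c w₀ = c' u' := by
          rw [hcL w₀ hw₀L]
          congr 1
          apply Subtype.ext
          show (ψ.symm ⟨w₀, hw₀L⟩).1 = u'.1
          have : (⟨w₀, hw₀L⟩ : {x // x ∈ Cs L}) = ψ ⟨u'.1, hu'A⟩ := rfl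
          rw [this, Equiv.symm_apply_apply]
        refine ⟨c' u', w₀, ⟨hadjw₀, hcolw₀⟩, ?_⟩
        rintro w ⟨hadjw, hcolw⟩
        rcases hnbr L v w hvL hadjw with hwL | hwX
        · set y : {x // x ∈ Cs a} := ψ.symm ⟨w, hwL⟩ with hydef
          have hψy : ψ y = ⟨w, hwL⟩ := Equiv.apply_symm_apply _ _
          have hwv : w ≠ v := hadjw.ne'
          have hyz : y ≠ z := by
            intro h
            apply hwv
            have : ψ y = ψ z := by rw [h]
            rw [hψy, hψz] at this
            exact congrArg Subtype.val this
          have hy1 : y.1 ≠ z.1 := fun h => hyz (Subtype.ext h)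
          have hadjy : G.Adj z.1 y.1 := hCclique a z.1 z.2 y.1 y.2 (Ne.symm hy1)
          have hyL : y.1 ∉ Cs L := hdisj a L haL y.1 y.2
          have hcy : c' ⟨y.1, hyL⟩ = c' u' := by
            rw [← hcolw, hcL w hwL]
          have := hU'uniq zS ⟨y.1, hyL⟩ hadjy hcy
          have hyu : y.1 = u'.1 := congrArg Subtype.val this
          have : ψ y = ψ ⟨u'.1, hu'A⟩ := by congr 1; exact Subtype.ext hyu
          rw [hψy] at this
          exact congrArg Subtype.val this
        · have hadjzw : G.Adj z.1 w := by
            have := hψX z w hwX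
            rw [hψz] at this
            exact this.mpr hadjw
          have hwL : w ∉ Cs L := hXC L w hwX
          have hcy : c' ⟨w, hwL⟩ = c' u' := by rw [← hcolw, hcn w hwL]
          have := hU'uniq zS ⟨w, hwL⟩ hadjzw hcy
          have hwu : w = u'.1 := congrArg Subtype.val this
          exact absurd (hwu ▸ hwX) (hCX a u'.1 hu'A)
      · -- unique neighbor of the mirror is in X
        have hadju : G.Adj v u'.1 := by
          have := hψX z u'.1 hu'X
          rw [hψz] at this
          exact this.mp huadj
        have hcolu : c u'.1 = c' u' := by
          rw [hcn u'.1 hu'L]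
        refine ⟨c' u', u'.1, ⟨hadju, hcolu⟩, ?_⟩
        rintro w ⟨hadjw, hcolw⟩
        rcases hnbr L v w hvL hadjw with hwL | hwX
        · set y : {x // x ∈ Cs a} := ψ.symm ⟨w, hwL⟩ with hydef
          have hψy : ψ y = ⟨w, hwL⟩ := Equiv.apply_symm_apply _ _
          have hwv : w ≠ v := hadjw.ne'
          have hyz : y ≠ z := by
            intro h
            apply hwv
            have : ψ y = ψ z := by rw [h]
            rw [hψy, hψz] at this
            exact congrArg Subtype.val this
          have hy1 : y.1 ≠ z.1 := fun h => hyz (Subtype.ext h)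
          have hadjy : G.Adj z.1 y.1 := hCclique a z.1 z.2 y.1 y.2 (Ne.symm hy1)
          have hyL : y.1 ∉ Cs L := hdisj a L haL y.1 y.2
          have hcy : c' ⟨y.1, hyL⟩ = c' u' := by rw [← hcolw, hcL w hwL]
          have := hU'uniq zS ⟨y.1, hyL⟩ hadjy hcy
          have hyu : y.1 = u'.1 := congrArg Subtype.val this
          exact absurd (hyu ▸ y.2) (hXC a u'.1 hu'X)
        · have hadjzw : G.Adj z.1 w := by
            have := hψX z w hwX
            rw [hψz] at this
            exact this.mpr hadjw
          have hwL : w ∉ Cs L := hXC L w hwX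
          have hcy : c' ⟨w, hwL⟩ = c' u' := by rw [← hcolw, hcn w hwL]
          have := hU'uniq zS ⟨w, hwL⟩ hadjzw hcy
          exact congrArg Subtype.val this
    · -- v survives
      set vS : {x : V | x ∉ Cs L} := ⟨v, hvL⟩ with hvSdef
      set u' := U' vS with hu'def
      have huadj : G.Adj v u'.1 := hU'adj vS
      have hu'L : u'.1 ∉ Cs L := u'.2
      by_cases hvX : v ∈ X
      · -- v ∈ X: the unique neighbor is not in Cs a by the pigeonhole choice
        have hu'A : u'.1 ∉ Cs a := by
          have := haU' v hvX
          have heq : (⟨v, hXC L v hvX⟩ : {x : V | x ∉ Cs L}) = vS := rfl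
          rwa [heq] at this
        have hcolu : c u'.1 = c' u' := hcn u'.1 hu'L
        refine ⟨c' u', u'.1, ⟨huadj, hcolu⟩, ?_⟩
        rintro w ⟨hadjw, hcolw⟩
        by_cases hwL : w ∈ Cs L
        · set y : {x // x ∈ Cs a} := ψ.symm ⟨w, hwL⟩ with hydef
          have hψy : ψ y = ⟨w, hwL⟩ := Equiv.apply_symm_apply _ _
          have hadjy : G.Adj v y.1 := by
            have := hψX y v hvX
            rw [hψy] at this
            exact (this.mpr hadjw.symm).symm
          have hyL : y.1 ∉ Cs L := hdisj a L haL y.1 y.2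
          have hcy : c' ⟨y.1, hyL⟩ = c' u' := by rw [← hcolw, hcL w hwL]
          have := hU'uniq vS ⟨y.1, hyL⟩ hadjy hcy
          have hyu : y.1 = u'.1 := congrArg Subtype.val this
          exact absurd (hyu ▸ y.2) hu'A
        · have hcy : c' ⟨w, hwL⟩ = c' u' := by rw [← hcolw, hcn w hwL]
          have := hU'uniq vS ⟨w, hwL⟩ hadjw hcy
          exact congrArg Subtype.val this
      · -- v ∉ X, v ∉ Cs L: neighborhood is disjoint from Cs L
        have hcolu : c u'.1 = c' u' := hcn u'.1 hu'L
        refine ⟨c' u', u'.1, ⟨huadj, hcolu⟩, ?_⟩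
        rintro w ⟨hadjw, hcolw⟩
        have hwL : w ∉ Cs L := fun h => hnadj L v w hvX hvL h hadjw
        have hcy : c' ⟨w, hwL⟩ = c' u' := by rw [← hcolw, hcn w hwL]
        have := hU'uniq vS ⟨w, hwL⟩ hadjw hcy
        exact congrArg Subtype.val this
end

section
/- Let G be a finite simple graph, let X ⊆ V(G) be such that the induced subgraph G \ X is a connected threshold graph, and let p be the minimum number of colors in a coloring c : V(G) → S such that for every x ∈ X some color is assigned to exactly one vertex of N[x]. Then p ≤ χcf[G] ≤ p + 1. -/
/-- A graph is a threshold graph if it can be built from the empty graph by repeatedly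
adding either an isolated vertex or a universal vertex: there is an ordering of the
vertices in which every vertex is adjacent to all, or to none, of the earlier ones. -/
def IsThresholdGraph {W : Type*} (H : SimpleGraph W) : Prop :=
  ∃ (n : ℕ) (e : Fin n ≃ W), ∀ i : Fin n,
    (∀ j : Fin n, j < i → H.Adj (e j) (e i)) ∨ (∀ j : Fin n, j < i → ¬ H.Adj (e j) (e i))

lemma threshold_universal {W : Type*} (H : SimpleGraph W) (hthr : IsThresholdGraph H)
    (hconn : H.Connected) : ∃ u : W, ∀ v : W, v ≠ u → H.Adj u v := by
  obtain ⟨n, e, he⟩ := hthr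
  have hW : Nonempty W := hconn.nonempty
  have hn : 0 < n := by
    rcases hW with ⟨w⟩
    have := (e.symm w).isLt
    omega
  set i : Fin n := ⟨n - 1, by omega⟩ with hi
  have hmax : ∀ j : Fin n, j ≠ i → j < i := by
    intro j hj
    have h1 := j.isLt
    have h2 : (j : ℕ) ≠ n - 1 := fun h => hj (Fin.ext h)
    exact Fin.lt_def.mpr (by simp [hi]; omega)
  rcases he i with h | h
  · refine ⟨e i, fun v hv => ?_⟩
    have hne : e.symm v ≠ i := fun h' => hv (by rw [← h']; simp)
    have := h (e.symm v) (hmax _ hne)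
    simpa using this.symm
  · have hiso : ∀ w : W, ¬ H.Adj (e i) w := by
      intro w hw
      have hwi : w ≠ e i := fun h => H.irrefl (h ▸ hw)
      have hne : e.symm w ≠ i := fun h' => hwi (by rw [← h']; simp)
      exact h (e.symm w) (hmax _ hne) (by simpa using hw.symm)
    refine ⟨e i, fun v hv => ?_⟩
    exfalso
    obtain ⟨wlk⟩ := hconn.preconnected (e i) v
    cases wlk with
    | nil => exact hv rfl
    | cons hadj _ => exact hiso _ hadj

/-- If `G \ X` is a connected threshold graph and `p` is the minimum number of colors
in a coloring of `G` such that every `x ∈ X` has a uniquely colored vertex in its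
closed neighborhood, then `p ≤ χcf[G] ≤ p + 1`. -/
theorem cfcn_dist_to_threshold {V : Type*} [Fintype V] (G : SimpleGraph V) (X : Set V)
    (hthr : IsThresholdGraph (G.induce Xᶜ))
    (hconn : (G.induce Xᶜ).Connected)
    (p q : ℕ)
    (hp : p = sInf {k : ℕ | ∃ c : V → Fin k, ∀ x ∈ X,
      ∃ a : Fin k, ∃! u : V, (G.Adj x u ∨ u = x) ∧ c u = a})
    (hq : q = sInf {k : ℕ | ∃ c : V → Fin k, IsCFCN G c}) :
    p ≤ q ∧ q ≤ p + 1 := by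
  set B : Set ℕ := {k : ℕ | ∃ c : V → Fin k, ∀ x ∈ X,
      ∃ a : Fin k, ∃! u : V, (G.Adj x u ∨ u = x) ∧ c u = a} with hB
  set A : Set ℕ := {k : ℕ | ∃ c : V → Fin k, IsCFCN G c} with hA
  have hinj : Fintype.card V ∈ A := by
    refine ⟨Fintype.equivFin V, fun v => ⟨Fintype.equivFin V v, v, ⟨Or.inr rfl, rfl⟩, ?_⟩⟩
    rintro y ⟨-, hy⟩
    exact (Fintype.equivFin V).injective hy
  have hAB : A ⊆ B := by
    rintro k ⟨c, hc⟩
    exact ⟨c, fun x _ => hc x⟩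
  constructor
  · subst hp hq
    exact Nat.sInf_le (hAB (Nat.sInf_mem ⟨_, hinj⟩))
  · classical
    obtain ⟨c, hc⟩ : p ∈ B := hp ▸ Nat.sInf_mem ⟨_, hAB hinj⟩
    obtain ⟨u, hu⟩ := threshold_universal _ hthr hconn
    have hu0 : (u : V) ∉ X := u.2
    set c' : V → Fin (p + 1) := fun v => if v = (u : V) then Fin.last p else (c v).castSucc
      with hc'
    have hlast : ∀ v : V, c' v = Fin.last p ↔ v = (u : V) := by
      intro v
      constructor
      · intro h
        by_contra hne
        simp only [hc', if_neg hne] at h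
        exact (Fin.castSucc_lt_last (c v)).ne h
      · intro h; simp [hc', h]
    have hcf : IsCFCN G c' := by
      intro v
      by_cases hvX : v ∈ X
      · obtain ⟨a, w, ⟨hw1, hw2⟩, hw3⟩ := hc v hvX
        by_cases hwu : w = (u : V)
        · refine ⟨Fin.last p, w, ⟨hw1, (hlast w).mpr hwu⟩, ?_⟩
          rintro y ⟨-, hy⟩
          rw [(hlast y).mp hy, ← hwu]
        · refine ⟨a.castSucc, w, ⟨hw1, by simp [hc', hwu, hw2]⟩, ?_⟩
          rintro y ⟨hy1, hy2⟩
          have hyu : y ≠ (u : V) := by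
            intro h
            have hl := (hlast y).mpr h
            rw [hl] at hy2
            exact (Fin.castSucc_lt_last a).ne hy2.symm
          simp only [hc', if_neg hyu, Fin.castSucc_inj] at hy2
          exact hw3 y ⟨hy1, hy2⟩
      · refine ⟨Fin.last p, (u : V), ⟨?_, (hlast _).mpr rfl⟩, ?_⟩
        · by_cases hvu : v = (u : V)
          · exact Or.inr hvu.symm
          · have := hu ⟨v, hvX⟩ (fun h => hvu (congrArg Subtype.val h))
            exact Or.inl this.symm
        · rintro y ⟨-, hy⟩
          exact (hlast y).mp hy
    subst hq
    exact Nat.sInf_le ⟨c', hcf⟩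
end

section
/- Let G be a finite simple graph, let X ⊆ V(G) be such that the induced subgraph G \ X is a connected threshold graph on at least two vertices, and let p be the minimum number of colors in a coloring c : V(G) → S such that for every x ∈ X some color is assigned to exactly one vertex of N(x). Then p ≤ χcf(G) ≤ p + 2. -/
/-- Key construction: given a universal vertex `u` of `G \ X` with a neighbor `w`,
and a coloring satisfying the `X`-condition with `k` colors, build a CF-ON coloring
with `k + 2` colors. -/
lemma cfon_construct {V : Type*} (G : SimpleGraph V) (X : Set V)
    (u w : V) (hw : w ∉ X) (huw : u ≠ w)
    (huniv : ∀ v, v ∉ X → v ≠ u → G.Adj u v)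
    (k : ℕ) (c : V → Fin k)
    (hc : ∀ x ∈ X, ∃ a : Fin k, ∃! y : V, G.Adj x y ∧ c y = a) :
    ∃ c' : V → Fin (k + 2), IsCFON G c' := by
  classical
  set A : Fin (k + 2) := ⟨k, by omega⟩ with hAdef
  set B : Fin (k + 2) := ⟨k + 1, by omega⟩ with hBdef
  set c' : V → Fin (k + 2) := fun v =>
    if v = u then A else if v = w then B else ⟨(c v).1, by omega⟩ with hc'def
  have hc'u : ∀ v, v = u → c' v = A := fun v h => by
    simp only [hc'def, if_pos h]
  have hc'w : ∀ v, v ≠ u → v = w → c' v = B := fun v h1 h2 => by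
    simp only [hc'def, if_neg h1, if_pos h2]
  have hc'o : ∀ v, v ≠ u → v ≠ w → c' v = ⟨(c v).1, by omega⟩ := fun v h1 h2 => by
    simp only [hc'def, if_neg h1, if_neg h2]
  have hA : ∀ v, c' v = A ↔ v = u := by
    intro v
    constructor
    · intro h
      by_contra hvu
      by_cases hvw : v = w
      · rw [hc'w v hvu hvw, hBdef, hAdef, Fin.mk.injEq] at h; omega
      · rw [hc'o v hvu hvw, hAdef, Fin.mk.injEq] at h
        have := (c v).2; omega
    · exact hc'u v
  have hB : ∀ v, c' v = B ↔ v = w := by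
    intro v
    constructor
    · intro h
      by_contra hvw
      by_cases hvu : v = u
      · rw [hc'u v hvu, hAdef, hBdef, Fin.mk.injEq] at h; omega
      · rw [hc'o v hvu hvw, hBdef, Fin.mk.injEq] at h
        have := (c v).2; omega
    · intro h
      exact hc'w v (fun hh => huw ((hh.symm.trans h).symm ▸ rfl : u = w)) h
  refine ⟨c', fun v => ?_⟩
  by_cases hadju : G.Adj v u
  · exact ⟨A, u, ⟨hadju, (hA u).mpr rfl⟩, fun y hy => (hA y).mp hy.2⟩
  by_cases hadjw : G.Adj v w
  · exact ⟨B, w, ⟨hadjw, (hB w).mpr rfl⟩, fun y hy => (hB y).mp hy.2⟩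
  by_cases hv : v ∈ X
  · -- use the old coloring; neighbors of `v` avoid `u` and `w`
    obtain ⟨a, y, ⟨hy1, hy2⟩, hyu⟩ := hc v hv
    have key : ∀ z, G.Adj v z → c' z = ⟨(c z).1, by omega⟩ := by
      intro z hz
      exact hc'o z (fun h => hadju (h ▸ hz)) (fun h => hadjw (h ▸ hz))
    refine ⟨⟨a.1, by omega⟩, y, ⟨hy1, by rw [key y hy1]; simp only [Fin.mk.injEq]; exact congrArg Fin.val hy2⟩, ?_⟩
    intro z ⟨hz1, hz2⟩
    rw [key z hz1, Fin.mk.injEq] at hz2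
    exact hyu z ⟨hz1, Fin.val_injective hz2⟩
  · -- `v ∉ X`: since `u` is universal outside `X` and `v` is not adjacent to `u`,
    -- we must have `v = u`; but then `v` is adjacent to `w`, contradiction.
    exfalso
    have hvu : v = u := by
      by_contra hvu
      exact hadju ((huniv v hv hvu).symm)
    exact hadjw (hvu ▸ huniv w hw huw.symm)

/-- If `G \ X` is a connected threshold graph on at least two vertices and `p` is the
minimum number of colors in a coloring of `G` such that every `x ∈ X` has a uniquely
colored vertex in its open neighborhood, then `p ≤ χcf(G) ≤ p + 2`. -/
theorem cfon_dist_to_threshold {V : Type*} [Fintype V] (G : SimpleGraph V) (X : Set V)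
    (hthr : IsThresholdGraph (G.induce Xᶜ))
    (hconn : (G.induce Xᶜ).Connected)
    (hcard : ∃ u v : V, u ∉ X ∧ v ∉ X ∧ u ≠ v)
    (p q : ℕ)
    (hp : p = sInf {k : ℕ | ∃ c : V → Fin k, ∀ x ∈ X,
      ∃ a : Fin k, ∃! u : V, G.Adj x u ∧ c u = a})
    (hq : q = sInf {k : ℕ | ∃ c : V → Fin k, IsCFON G c}) :
    p ≤ q ∧ q ≤ p + 2 := by
  classical
  set P := {k : ℕ | ∃ c : V → Fin k, ∀ x ∈ X,
      ∃ a : Fin k, ∃! u : V, G.Adj x u ∧ c u = a} with hP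
  set Q := {k : ℕ | ∃ c : V → Fin k, IsCFON G c} with hQ
  have hQP : Q ⊆ P := by
    rintro k ⟨c, hc⟩
    exact ⟨c, fun x _ => hc x⟩
  obtain ⟨a, b, ha, hb, hab⟩ := hcard
  have hkey : ∃ u w : V, u ∉ X ∧ w ∉ X ∧ u ≠ w ∧ ∀ v, v ∉ X → v ≠ u → G.Adj u v := by
    obtain ⟨n, e, he⟩ := hthr
    have hn : n ≠ 0 := by
      rintro rfl
      exact Fin.elim0 (e.symm ⟨a, ha⟩)
    set i₀ : Fin n := ⟨n - 1, by omega⟩ with hi₀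
    have hmax : ∀ j : Fin n, j ≠ i₀ → j < i₀ := by
      intro j hj
      have h1 : j.1 < n := j.2
      have h2 : j.1 ≠ n - 1 := fun h => hj (Fin.ext h)
      rw [Fin.lt_def]
      show j.1 < n - 1
      omega
    set u' : ↥Xᶜ := e i₀ with hu'
    have huniv : ∀ v, v ∉ X → v ≠ (u' : V) → G.Adj (u' : V) v := by
      rcases he i₀ with hall | hnone
      · intro v hv hvu
        set j : Fin n := e.symm ⟨v, hv⟩ with hj
        have hjne : j ≠ i₀ := by
          intro h
          apply hvu
          have h2 : (⟨v, hv⟩ : ↥Xᶜ) = u' := by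
            rw [hu', ← h, hj, Equiv.apply_symm_apply]
          exact congrArg Subtype.val h2
        have hadj : (G.induce Xᶜ).Adj (e j) u' := hall j (hmax j hjne)
        have hG : G.Adj ((e j : ↥Xᶜ) : V) (u' : V) := hadj
        have hej : ((e j : ↥Xᶜ) : V) = v := by rw [hj, Equiv.apply_symm_apply]
        rw [hej] at hG
        exact hG.symm
      · exfalso
        have hother : ∃ z : ↥Xᶜ, z ≠ u' := by
          by_cases h : (⟨a, ha⟩ : ↥Xᶜ) = u'
          · refine ⟨⟨b, hb⟩, fun hh => hab ?_⟩
            exact (congrArg Subtype.val (hh.trans h.symm)).symm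
          · exact ⟨⟨a, ha⟩, h⟩
        obtain ⟨z, hz⟩ := hother
        obtain ⟨Wlk⟩ := hconn.preconnected u' z
        cases Wlk with
        | nil => exact hz rfl
        | cons hadj _ =>
          rename_i y _
          have hyne : y ≠ u' := fun h => (G.induce Xᶜ).irrefl (h ▸ hadj)
          set j : Fin n := e.symm y with hj
          have hjne : j ≠ i₀ := by
            intro h
            apply hyne
            rw [hu', ← h, hj, Equiv.apply_symm_apply]
          apply hnone j (hmax j hjne)
          have hej : e j = y := by rw [hj, Equiv.apply_symm_apply]
          rw [hej]
          exact hadj.symm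
    have hu'mem : (u' : V) ∉ X := u'.2
    by_cases h : (u' : V) = a
    · refine ⟨u', b, hu'mem, hb, ?_, huniv⟩
      rw [h]; exact hab
    · exact ⟨u', a, hu'mem, ha, h, huniv⟩
  obtain ⟨u, w, hu, hw, huw, huniv⟩ := hkey
  have hconstruct : ∀ k ∈ P, k + 2 ∈ Q := by
    rintro k ⟨c, hc⟩
    exact cfon_construct G X u w hw huw huniv k c hc
  constructor
  · by_cases hQne : Q.Nonempty
    · have hqQ : q ∈ Q := hq ▸ Nat.sInf_mem hQne
      exact hp ▸ Nat.sInf_le (hQP hqQ)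
    · have hPe : P = ∅ := by
        by_contra hPne
        obtain ⟨k, hk⟩ := Set.nonempty_iff_ne_empty.mpr hPne
        exact hQne ⟨k + 2, hconstruct k hk⟩
      rw [hp, hPe, Nat.sInf_empty]
      exact Nat.zero_le _
  · by_cases hPne : P.Nonempty
    · have hpP : p ∈ P := hp ▸ Nat.sInf_mem hPne
      exact hq ▸ Nat.sInf_le (hconstruct p hpP)
    · have hQe : Q = ∅ := by
        rw [Set.not_nonempty_iff_eq_empty] at hPne
        exact Set.eq_empty_of_subset_empty (hPne ▸ hQP)
      rw [hq, hQe, Nat.sInf_empty]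
      exact Nat.zero_le _
end

section
/- Let G be a finite split graph with at least one edge. Then 2 ≤ χcf[G] ≤ 3. -/
/-- For a split graph `G` (vertex set partitioned into a clique `C` and an
independent set `Cᶜ`) with at least one edge, `2 ≤ χcf[G] ≤ 3`. -/
theorem cfcn_split_graph_bounds {V : Type*} [Fintype V] (G : SimpleGraph V)
    (C : Set V)
    (hclique : ∀ u ∈ C, ∀ v ∈ C, u ≠ v → G.Adj u v)
    (hindep : ∀ u v : V, u ∉ C → v ∉ C → ¬ G.Adj u v)
    (hedge : ∃ u v : V, G.Adj u v) :
    2 ≤ sInf {k : ℕ | ∃ c : V → Fin k, IsCFCN G c} ∧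
      sInf {k : ℕ | ∃ c : V → Fin k, IsCFCN G c} ≤ 3 := by
  classical
  obtain ⟨u₀, v₀, huv⟩ := hedge
  have hwC : ∃ w, w ∈ C := by
    by_contra h
    push_neg at h
    exact hindep u₀ v₀ (h u₀) (h v₀) huv
  obtain ⟨w, hwC⟩ := hwC
  set c : V → Fin 3 := fun v => if v = w then 1 else
    if v ∉ C ∧ ¬ G.Adj w v then 2 else 0 with hc
  have h1 : ∀ x, c x = 1 → x = w := by
    intro x hx
    by_contra hxw
    simp only [hc, if_neg hxw] at hx
    split_ifs at hx <;> exact absurd hx (by decide)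
  have h2 : ∀ x, c x = 2 → x ∉ C ∧ ¬ G.Adj w x := by
    intro x hx
    by_cases hxw : x = w
    · simp only [hc, if_pos hxw] at hx
      exact absurd hx (by decide)
    · simp only [hc, if_neg hxw] at hx
      by_cases h : x ∉ C ∧ ¬ G.Adj w x
      · exact h
      · rw [if_neg h] at hx; exact absurd hx (by decide)
  have hcw : c w = 1 := by simp [hc]
  have hmem : 3 ∈ {k : ℕ | ∃ c : V → Fin k, IsCFCN G c} := by
    refine ⟨c, fun v => ?_⟩
    by_cases hB : v ≠ w ∧ v ∉ C ∧ ¬ G.Adj w v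
    · obtain ⟨hvw, hvC, hvA⟩ := hB
      have hcv : c v = 2 := by
        simp only [hc, if_neg hvw]
        rw [if_pos ⟨hvC, hvA⟩]
      refine ⟨2, v, ⟨Or.inr rfl, hcv⟩, ?_⟩
      rintro x ⟨hadj | rfl, hx⟩
      · exact absurd hadj (fun h => hindep v x hvC (h2 x hx).1 h)
      · rfl
    · -- w ∈ N[v]
      have hNw : G.Adj v w ∨ w = v := by
        by_cases hvw : v = w
        · exact Or.inr hvw.symm
        · push_neg at hB
          by_cases hvC : v ∈ C
          · exact Or.inl (hclique v hvC w hwC hvw)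
          · exact Or.inl (hB hvw hvC).symm
      refine ⟨1, w, ⟨hNw, hcw⟩, ?_⟩
      rintro x ⟨_, hx⟩
      exact h1 x hx
  have hne : ({k : ℕ | ∃ c : V → Fin k, IsCFCN G c}).Nonempty := ⟨3, hmem⟩
  have hinf := Nat.sInf_mem hne
  refine ⟨?_, Nat.sInf_le hmem⟩
  by_contra hlt
  push_neg at hlt
  have hcase : sInf {k : ℕ | ∃ c : V → Fin k, IsCFCN G c} = 0 ∨
      sInf {k : ℕ | ∃ c : V → Fin k, IsCFCN G c} = 1 := by omega
  rcases hcase with h0 | h01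
  · rw [h0] at hinf
    obtain ⟨c', _⟩ := hinf
    exact (c' u₀).elim0
  · rw [h01] at hinf
    obtain ⟨c', hc'⟩ := hinf
    obtain ⟨a, x, _, huniq⟩ := hc' u₀
    have e1 : v₀ = x := huniq v₀ ⟨Or.inl huv, Subsingleton.elim _ _⟩
    have e2 : u₀ = x := huniq u₀ ⟨Or.inr rfl, Subsingleton.elim _ _⟩
    exact G.ne_of_adj huv (e2.trans e1.symm)
end

section
/- Let G be a finite simple graph and let k ≥ 3. Let G' be the graph obtained from G by adding two new vertices x and y adjacent to each other and to every vertex of G. Let H be the split graph whose vertex set is V(G') together with one new vertex I_e for each edge e of G', whose clique is V(G') (all pairs of vertices of G' adjacent in H), and in which each vertex I_{uv} is adjacent exactly to u and v. Then G has a proper k-coloring if and only if H admits a conflict-free open neighborhood coloring with k + 2 colors. -/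
/-- The graph `G'` obtained from `G` by adding two new vertices `x`, `y` (encoded as
`Sum.inr 0` and `Sum.inr 1`) adjacent to each other and to every vertex of `G`. -/
def addTwoUniversal {V : Type*} (G : SimpleGraph V) : SimpleGraph (V ⊕ Fin 2) :=
  SimpleGraph.fromRel (fun a b =>
    (∃ u v : V, a = Sum.inl u ∧ b = Sum.inl v ∧ G.Adj u v) ∨ (∃ i : Fin 2, b = Sum.inr i))

/-- The split graph `H` built from `G' = addTwoUniversal G`: its vertices are the
vertices of `G'` together with one new vertex `I_e` for every edge `e` of `G'`; the
vertices of `G'` form a clique, each `I_e` is adjacent exactly to the two endpoints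
of `e`, and the vertices `I_e` form an independent set. -/
def splitGadget {V : Type*} (G : SimpleGraph V) :
    SimpleGraph ((V ⊕ Fin 2) ⊕ ↥(addTwoUniversal G).edgeSet) :=
  SimpleGraph.fromRel (fun a b =>
    (∃ w w' : V ⊕ Fin 2, a = Sum.inl w ∧ b = Sum.inl w') ∨
    (∃ (w : V ⊕ Fin 2) (e : ↥(addTwoUniversal G).edgeSet),
      a = Sum.inl w ∧ b = Sum.inr e ∧ w ∈ (e : Sym2 (V ⊕ Fin 2))))

section Aux
variable {V : Type*} {G : SimpleGraph V}

lemma addTwo_adj_inl_inl {u v : V} :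
    (addTwoUniversal G).Adj (Sum.inl u) (Sum.inl v) ↔ G.Adj u v := by
  simp only [addTwoUniversal, SimpleGraph.fromRel_adj]
  constructor
  · rintro ⟨hne, h⟩
    rcases h with (⟨a,b,ha,hb,hab⟩|⟨i,hi⟩)|(⟨a,b,ha,hb,hab⟩|⟨i,hi⟩) <;>
      first
      | (cases ha; cases hb; first | exact hab | exact hab.symm)
      | exact absurd hi (by simp)
  · intro h
    exact ⟨by simp [h.ne], Or.inl (Or.inl ⟨u, v, rfl, rfl, h⟩)⟩

lemma addTwo_adj_inr {a : V ⊕ Fin 2} {i : Fin 2} (h : a ≠ Sum.inr i) :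
    (addTwoUniversal G).Adj a (Sum.inr i) := by
  simp only [addTwoUniversal, SimpleGraph.fromRel_adj]
  exact ⟨h, Or.inl (Or.inr ⟨i, rfl⟩)⟩

lemma split_adj_inl_inl {w w' : V ⊕ Fin 2} (h : w ≠ w') :
    (splitGadget G).Adj (Sum.inl w) (Sum.inl w') := by
  simp only [splitGadget, SimpleGraph.fromRel_adj]
  exact ⟨by simp [h], Or.inl (Or.inl ⟨w, w', rfl, rfl⟩)⟩

lemma split_adj_inl_iff {w : V ⊕ Fin 2} {u : (V ⊕ Fin 2) ⊕ ↥(addTwoUniversal G).edgeSet} :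
    (splitGadget G).Adj (Sum.inl w) u ↔
      (∃ w', u = Sum.inl w' ∧ w ≠ w') ∨
      (∃ e : ↥(addTwoUniversal G).edgeSet, u = Sum.inr e ∧ w ∈ (e : Sym2 (V ⊕ Fin 2))) := by
  simp only [splitGadget, SimpleGraph.fromRel_adj]
  constructor
  · rintro ⟨hne, h⟩
    rcases h with (⟨a,b,ha,hb⟩|⟨a,e,ha,hb,hm⟩)|(⟨a,b,ha,hb⟩|⟨a,e,ha,hb,hm⟩)
    · exact Or.inl ⟨b, hb, fun hw => hne (by rw [hb, hw])⟩
    · cases ha; exact Or.inr ⟨e, hb, hm⟩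
    · exact Or.inl ⟨a, ha, fun hw => hne (by rw [ha, hw])⟩
    · exact absurd hb (by simp)
  · rintro (⟨w', rfl, hne⟩|⟨e, rfl, hm⟩)
    · exact ⟨by simp [hne], Or.inl (Or.inl ⟨w, w', rfl, rfl⟩)⟩
    · exact ⟨by simp, Or.inl (Or.inr ⟨w, e, rfl, rfl, hm⟩)⟩

lemma split_adj_inr_iff {e : ↥(addTwoUniversal G).edgeSet}
    {u : (V ⊕ Fin 2) ⊕ ↥(addTwoUniversal G).edgeSet} :
    (splitGadget G).Adj (Sum.inr e) u ↔
      ∃ w : V ⊕ Fin 2, u = Sum.inl w ∧ w ∈ (e : Sym2 (V ⊕ Fin 2)) := by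
  simp only [splitGadget, SimpleGraph.fromRel_adj]
  constructor
  · rintro ⟨hne, h⟩
    rcases h with (⟨a,b,ha,hb⟩|⟨a,e',ha,hb,hm⟩)|(⟨a,b,ha,hb⟩|⟨a,e',ha,hb,hm⟩)
    · exact absurd ha (by simp)
    · exact absurd ha (by simp)
    · exact absurd hb (by simp)
    · cases (Sum.inr_injective (hb.symm : Sum.inr e' = Sum.inr e)); exact ⟨a, ha, hm⟩
  · rintro ⟨w, rfl, hm⟩
    exact ⟨by simp, Or.inr (Or.inr ⟨w, e, rfl, rfl, hm⟩)⟩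

end Aux


/-- For `k ≥ 3`, a graph `G` has a proper `k`-coloring if and only if the split graph
`splitGadget G` has a CF-ON coloring with `k + 2` colors. -/
theorem proper_coloring_iff_cfon_split {V : Type*} [Fintype V] [DecidableEq V]
    (G : SimpleGraph V) (k : ℕ) (hk : 3 ≤ k) :
    (∃ c : V → Fin k, ∀ u v : V, G.Adj u v → c u ≠ c v) ↔
      (∃ c : (V ⊕ Fin 2) ⊕ ↥(addTwoUniversal G).edgeSet → Fin (k + 2),
        IsCFON (splitGadget G) c) := by
  constructor
  · rintro ⟨c, hc⟩
    set f : V ⊕ Fin 2 → Fin (k + 2) :=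
      Sum.elim (fun v => (c v).castLE (by omega)) (fun i => ⟨k + i.1, by omega⟩) with hf_def
    have hf : ∀ w w', (addTwoUniversal G).Adj w w' → f w ≠ f w' := by
      rintro (u|i) (v|j) hadj h
      · have hval := congrArg Fin.val h
        simp [hf_def] at hval
        exact hc u v (addTwo_adj_inl_inl.mp hadj) (Fin.ext hval)
      · have hval := congrArg Fin.val h
        simp [hf_def] at hval
        have := (c u).isLt; omega
      · have hval := congrArg Fin.val h
        simp [hf_def] at hval
        have := (c v).isLt; omega
      · have hij : i ≠ j := by rintro rfl; exact hadj.ne rfl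
        have hval := congrArg Fin.val h
        simp [hf_def] at hval
        exact hij (Fin.ext (by omega))
    refine ⟨Sum.elim f (fun _ => ⟨0, by omega⟩), ?_⟩
    rintro (w | e)
    · rcases w with v | i
      · -- G-vertex: unique color k at x = inr 0
        refine ⟨f (Sum.inr 0), Sum.inl (Sum.inr 0),
          ⟨split_adj_inl_inl (by simp), rfl⟩, ?_⟩
        rintro (w' | e') ⟨hadj, hcol⟩
        · rcases split_adj_inl_iff.mp hadj with ⟨w'', hw, hne⟩ | ⟨e, he, _⟩
          · obtain rfl : w'' = w' := (Sum.inl_injective hw).symm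
            rcases w'' with u' | j
            · exfalso
              have hval := congrArg Fin.val hcol
              simp [hf_def] at hval
              have := (c u').isLt; omega
            · have hval := congrArg Fin.val hcol
              simp [hf_def] at hval
              have : j = 0 := Fin.ext (by omega)
              rw [this]
          · exact absurd he (by simp)
        · exfalso
          have hval := congrArg Fin.val hcol
          simp [hf_def] at hval
          omega
      · -- universal vertex inr i: the other universal vertex is unique
        fin_cases i
        · refine ⟨f (Sum.inr 1), Sum.inl (Sum.inr 1),
            ⟨split_adj_inl_inl (by simp), rfl⟩, ?_⟩
          rintro (w' | e') ⟨hadj, hcol⟩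
          · rcases split_adj_inl_iff.mp hadj with ⟨w'', hw, hne⟩ | ⟨e, he, _⟩
            · obtain rfl : w'' = w' := (Sum.inl_injective hw).symm
              rcases w'' with u' | j
              · exfalso
                have hval := congrArg Fin.val hcol
                simp [hf_def] at hval
                have := (c u').isLt; omega
              · have hval := congrArg Fin.val hcol
                simp [hf_def] at hval
                have : j = 1 := Fin.ext (by omega)
                rw [this]
            · exact absurd he (by simp)
          · exfalso
            have hval := congrArg Fin.val hcol
            simp [hf_def] at hval
            try omega
        · refine ⟨f (Sum.inr 0), Sum.inl (Sum.inr 0),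
            ⟨split_adj_inl_inl (by simp), rfl⟩, ?_⟩
          rintro (w' | e') ⟨hadj, hcol⟩
          · rcases split_adj_inl_iff.mp hadj with ⟨w'', hw, hne⟩ | ⟨e, he, _⟩
            · obtain rfl : w'' = w' := (Sum.inl_injective hw).symm
              rcases w'' with u' | j
              · exfalso
                have hval := congrArg Fin.val hcol
                simp [hf_def] at hval
                have := (c u').isLt; omega
              · have hval := congrArg Fin.val hcol
                simp [hf_def] at hval
                have : j = 0 := Fin.ext (by omega)
                rw [this]
            · exact absurd he (by simp)
          · exfalso
            have hval := congrArg Fin.val hcol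
            simp [hf_def] at hval
            try omega
    · -- edge vertex: endpoints distinct colors
      obtain ⟨e, he⟩ := e
      revert he
      induction e using Sym2.ind with
      | _ w w' =>
        intro he
        have hadj : (addTwoUniversal G).Adj w w' := he
        refine ⟨f w, Sum.inl w,
          ⟨split_adj_inr_iff.mpr ⟨w, rfl, Sym2.mem_mk_left w w'⟩, rfl⟩, ?_⟩
        rintro u ⟨huadj, hcol⟩
        obtain ⟨w0, rfl, hm⟩ := split_adj_inr_iff.mp huadj
        rcases Sym2.mem_iff.mp hm with rfl | rfl
        · rfl
        · exact absurd hcol (hf _ _ hadj.symm)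
  · rintro ⟨c, hc⟩
    have key : ∀ w w' : V ⊕ Fin 2, (addTwoUniversal G).Adj w w' →
        c (Sum.inl w) ≠ c (Sum.inl w') := by
      intro w w' hadj heq
      obtain ⟨a, u, hu, huniq⟩ :=
        hc (Sum.inr ⟨s(w, w'), hadj⟩)
      have h1 : (splitGadget G).Adj
          (Sum.inr ⟨s(w, w'), hadj⟩) (Sum.inl w) :=
        split_adj_inr_iff.mpr ⟨w, rfl, Sym2.mem_mk_left w w'⟩
      have h2 : (splitGadget G).Adj
          (Sum.inr ⟨s(w, w'), hadj⟩) (Sum.inl w') :=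
        split_adj_inr_iff.mpr ⟨w', rfl, Sym2.mem_mk_right w w'⟩
      obtain ⟨w0, rfl, hm⟩ := split_adj_inr_iff.mp hu.1
      rcases Sym2.mem_iff.mp hm with rfl | rfl
      · have := huniq (Sum.inl w') ⟨h2, by rw [← heq]; exact hu.2⟩
        exact hadj.ne (Sum.inl_injective this).symm
      · have := huniq (Sum.inl w) ⟨h1, by rw [heq]; exact hu.2⟩
        exact hadj.ne (Sum.inl_injective this)
    set A := c (Sum.inl (Sum.inr 0)) with hA
    set B := c (Sum.inl (Sum.inr 1)) with hB
    have hAB : A ≠ B := key _ _ (addTwo_adj_inr (by simp))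
    have hvA : ∀ v : V, c (Sum.inl (Sum.inl v)) ≠ A :=
      fun v => key _ _ (addTwo_adj_inr (by simp))
    have hvB : ∀ v : V, c (Sum.inl (Sum.inl v)) ≠ B :=
      fun v => key _ _ (addTwo_adj_inr (by simp))
    set S : Finset (Fin (k + 2)) := {A, B}ᶜ with hS
    have hScard : S.card = k := by
      rw [hS, Finset.card_compl]
      rw [Finset.card_insert_of_notMem (by simp [hAB]), Finset.card_singleton]
      simp
    have hmem : ∀ v : V, c (Sum.inl (Sum.inl v)) ∈ S := by
      intro v
      simp [hS, Finset.mem_compl, hvA v, hvB v]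
    refine ⟨fun v => (S.equivFin.trans (finCongr hScard)) ⟨c (Sum.inl (Sum.inl v)), hmem v⟩,
      ?_⟩
    intro u v huv h
    have := (S.equivFin.trans (finCongr hScard)).injective h
    have hcc : c (Sum.inl (Sum.inl u)) = c (Sum.inl (Sum.inl v)) :=
      congrArg Subtype.val this
    exact key _ _ (addTwo_adj_inl_inl.mpr huv) hcc
end

section
/- Let G be a finite interval graph with at least one edge. Then 2 ≤ χcf[G] ≤ 4. -/
attribute [local instance] Classical.propDecidable

noncomputable section CFCNAux

variable {V : Type*} [Fintype V] (a b : V → ℝ)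

/-- Specification of one greedy step from a chain vertex `x`. -/
def StepSpec (x : V) (o : Option V) : Prop :=
  (∀ y, o = some y → b x < b y ∧ (∀ w, a w ≤ b x → b w ≤ b y) ∧
      (∀ w, b x < a w → a y ≤ b w)) ∧
  (o = none → ∀ w, a w ≤ b x ∧ b w ≤ b x)

lemma step_ex (hab : ∀ v : V, a v ≤ b v) (x : V) : ∃ o : Option V, StepSpec a b x o := by
  classical
  by_cases hS : ∃ y : V, a y ≤ b x ∧ b x < b y
  · obtain ⟨y0, hy0⟩ := hS
    obtain ⟨y, hy, hymax⟩ := Finset.exists_max_image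
      (Finset.univ.filter fun v => a v ≤ b x ∧ b x < b v) b
      ⟨y0, by simpa using hy0⟩
    simp only [Finset.mem_filter, Finset.mem_univ, true_and] at hy
    refine ⟨some y, fun z hz => ?_, by simp⟩
    obtain rfl := Option.some.inj hz
    refine ⟨hy.2, fun w hw => ?_, fun w hw => le_trans hy.1 (le_trans hw.le (hab w))⟩
    by_cases hwb : b x < b w
    · exact hymax w (by simp [hw, hwb])
    · exact le_trans (not_lt.mp hwb) hy.2.le
  · push_neg at hS
    by_cases hT : ∃ y : V, b x < a y
    · obtain ⟨y0, hy0⟩ := hT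
      obtain ⟨y, hy, hymin⟩ := Finset.exists_min_image
        (Finset.univ.filter fun v => b x < a v) a ⟨y0, by simpa using hy0⟩
      simp only [Finset.mem_filter, Finset.mem_univ, true_and] at hy
      refine ⟨some y, fun z hz => ?_, by simp⟩
      obtain rfl := Option.some.inj hz
      have hby : b x < b y := lt_of_lt_of_le hy (hab y)
      refine ⟨hby, fun w hw => le_trans (hS w hw) hby.le,
        fun w hw => le_trans (hymin w (by simp [hw])) (hab w)⟩
    · push_neg at hT
      exact ⟨none, by simp [StepSpec], fun _ w => ⟨hT w, hS w (hT w)⟩⟩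

variable (hab : ∀ v : V, a v ≤ b v)

/-- One greedy step. -/
def step (x : V) : Option V := (step_ex a b hab x).choose

lemma step_spec (x : V) : StepSpec a b x (step a b hab x) := (step_ex a b hab x).choose_spec

variable [Nonempty V]

/-- A vertex whose interval has the smallest left endpoint. -/
def start : V :=
  (Finset.exists_min_image Finset.univ a ⟨Classical.arbitrary V, Finset.mem_univ _⟩).choose

lemma start_min (w : V) : a (start a) ≤ a w := by
  have h := (Finset.exists_min_image Finset.univ a
    ⟨Classical.arbitrary V, Finset.mem_univ _⟩).choose_spec
  exact h.2 w (Finset.mem_univ w)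

/-- The greedy chain. -/
def chain : ℕ → Option V
  | 0 => some (start a)
  | n + 1 => (chain n).bind (step a b hab)

lemma chain_step {n : ℕ} {x y : V} (hx : chain a b hab n = some x)
    (hy : chain a b hab (n + 1) = some y) : step a b hab x = some y := by
  rw [chain, hx] at hy; exact hy

lemma chain_succ_lt {n : ℕ} {x y : V} (hx : chain a b hab n = some x)
    (hy : chain a b hab (n + 1) = some y) : b x < b y :=
  ((step_spec a b hab x).1 y (chain_step a b hab hx hy)).1

lemma chain_none_mono {m n : ℕ} (hmn : m ≤ n) (hm : chain a b hab m = none) :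
    chain a b hab n = none := by
  induction n with
  | zero => exact (by omega : m = 0) ▸ hm
  | succ n ih =>
    rcases Nat.lt_or_ge m (n + 1) with h | h
    · have := ih (by omega)
      rw [chain, this]; rfl
    · have : m = n + 1 := by omega
      exact this ▸ hm

lemma chain_some_of_le {m n : ℕ} (hmn : m ≤ n) {y : V} (hn : chain a b hab n = some y) :
    ∃ x, chain a b hab m = some x := by
  cases hm : chain a b hab m with
  | none => rw [chain_none_mono a b hab hmn hm] at hn; exact absurd hn (by simp)
  | some x => exact ⟨x, rfl⟩

lemma chain_lt {m : ℕ} {x : V} (hx : chain a b hab m = some x) :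
    ∀ {n : ℕ} {y : V}, m < n → chain a b hab n = some y → b x < b y := by
  intro n
  induction n with
  | zero => intro y h; omega
  | succ n ih =>
    intro y hmn hy
    obtain ⟨z, hz⟩ := chain_some_of_le a b hab (Nat.le_succ n) hy
    have hzy : b z < b y := chain_succ_lt a b hab hz hy
    rcases Nat.lt_or_ge m n with h | h
    · exact lt_trans (ih h hz) hzy
    · have : m = n := by omega
      subst this
      rw [hx] at hz; obtain rfl := Option.some.inj hz
      exact hzy

lemma chain_le {m n : ℕ} (hmn : m ≤ n) {x y : V} (hx : chain a b hab m = some x)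
    (hy : chain a b hab n = some y) : b x ≤ b y := by
  rcases Nat.lt_or_ge m n with h | h
  · exact (chain_lt a b hab hx h hy).le
  · have : m = n := by omega
    subst this; rw [hx] at hy; obtain rfl := Option.some.inj hy; exact le_refl _

lemma chain_inj {m n : ℕ} {x : V} (hx : chain a b hab m = some x)
    (hy : chain a b hab n = some x) : m = n := by
  rcases lt_trichotomy m n with h | h | h
  · exact absurd (chain_lt a b hab hx h hy) (lt_irrefl _)
  · exact h
  · exact absurd (chain_lt a b hab hy h hx) (lt_irrefl _)

lemma exists_terminal : ∃ N x, chain a b hab N = some x ∧ ∀ w, a w ≤ b x ∧ b w ≤ b x := by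
  have hnone : ∃ n, chain a b hab n = none := by
    by_contra h
    push_neg at h
    have hsome : ∀ n, ∃ x, chain a b hab n = some x := by
      intro n
      cases hc : chain a b hab n with
      | none => exact absurd hc (h n)
      | some x => exact ⟨x, rfl⟩
    obtain ⟨m, n, hmn, heq⟩ := Finite.exists_ne_map_eq_of_infinite (fun n => (hsome n).choose)
    have h2 : chain a b hab n = some (hsome m).choose := by
      rw [heq]; exact (hsome n).choose_spec
    exact hmn (chain_inj a b hab (hsome m).choose_spec h2)
  classical
  set N := Nat.find hnone with hNdef
  have hN : chain a b hab N = none := Nat.find_spec hnone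
  have hN0 : N ≠ 0 := by
    intro h
    rw [h] at hN
    simp [chain] at hN
  obtain ⟨M, hM⟩ : ∃ M, N = M + 1 := ⟨N - 1, by omega⟩
  cases hx : chain a b hab M with
  | none => exact absurd hx (Nat.find_min hnone (by omega))
  | some x =>
    refine ⟨M, x, hx, ?_⟩
    have : step a b hab x = none := by
      rw [hM, chain, hx] at hN; exact hN
    exact (step_spec a b hab x).2 this

/-- The CF-CN coloring: chain vertices get colors 1,2,3 cyclically, others get 0. -/
def cfcColoring : V → Fin 4 := fun v =>
  if h : ∃ n, chain a b hab n = some v then ⟨1 + (Nat.find h) % 3, by omega⟩ else 0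

lemma cfcColoring_chain {k : ℕ} {x : V} (hx : chain a b hab k = some x) :
    cfcColoring a b hab x = ⟨1 + k % 3, by omega⟩ := by
  have h : ∃ n, chain a b hab n = some x := ⟨k, hx⟩
  have hfind : Nat.find h = k := chain_inj a b hab (Nat.find_spec h) hx
  simp only [cfcColoring, dif_pos h, hfind]

theorem cfcColoring_isCFCN (G : SimpleGraph V)
    (hrep : ∀ u v : V, u ≠ v →
      (G.Adj u v ↔ (Set.Icc (a u) (b u) ∩ Set.Icc (a v) (b v)).Nonempty)) :
    IsCFCN G (cfcColoring a b hab) := by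
  intro v
  obtain ⟨N, xN, hN, hterm⟩ := exists_terminal a b hab
  have hK : ∃ k : ℕ, ∃ x, chain a b hab k = some x ∧ a v ≤ b x :=
    ⟨N, xN, hN, (hterm v).1⟩
  set k := Nat.find hK with hkdef
  obtain ⟨x, hxk, hvx⟩ := Nat.find_spec hK
  rw [← hkdef] at hxk
  -- the intervals of v and x intersect
  have hax : a x ≤ b v := by
    cases hk : k with
    | zero =>
      rw [hk] at hxk
      have : x = start a := Option.some.inj hxk.symm
      rw [this]
      exact le_trans (start_min a v) (hab v)
    | succ k' =>
      rw [hk] at hxk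
      obtain ⟨x', hx'⟩ := chain_some_of_le a b hab (Nat.le_succ k') hxk
      have hmin : ¬ (∃ y, chain a b hab k' = some y ∧ a v ≤ b y) :=
        Nat.find_min hK (by omega)
      have hx'v : b x' < a v := by
        by_contra h
        exact hmin ⟨x', hx', not_lt.mp h⟩
      exact ((step_spec a b hab x').1 x (chain_step a b hab hx' hxk)).2.2 v hx'v
  have hmem : G.Adj v x ∨ x = v := by
    by_cases hxv : x = v
    · exact Or.inr hxv
    · refine Or.inl ((hrep v x (fun h => hxv h.symm)).mpr ?_)
      exact ⟨max (a v) (a x),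
        ⟨le_max_left _ _, max_le (hab v) hax⟩,
        ⟨le_max_right _ _, max_le hvx (hab x)⟩⟩
  refine ⟨⟨1 + k % 3, by omega⟩, x, ⟨hmem, cfcColoring_chain a b hab hxk⟩, ?_⟩
  rintro u' ⟨hmem', hcol'⟩
  -- intervals of u' and v intersect
  have hiv : a u' ≤ b v ∧ a v ≤ b u' := by
    rcases hmem' with h | rfl
    · obtain ⟨t, ht1, ht2⟩ := (hrep v u' (G.ne_of_adj h)).mp h
      exact ⟨le_trans ht2.1 ht1.2, le_trans ht1.1 ht2.2⟩
    · exact ⟨hab u', hab u'⟩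
  -- u' is on the chain
  have hu'ex : ∃ n, chain a b hab n = some u' := by
    by_contra h
    rw [cfcColoring, dif_neg h] at hcol'
    have : (0 : Fin 4).val = 1 + k % 3 := by rw [hcol']
    simp only [Fin.val_zero] at this
    omega
  set j := Nat.find hu'ex with hjdef
  have hju : chain a b hab j = some u' := Nat.find_spec hu'ex
  have hjcol : 1 + j % 3 = 1 + k % 3 := by
    have h1 := cfcColoring_chain a b hab hju
    rw [hcol'] at h1
    exact (congrArg Fin.val h1).symm
  have hkj : k ≤ j := Nat.find_min' hK ⟨u', hju, hiv.2⟩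
  have hjk2 : j ≤ k + 2 := by
    by_contra h
    push_neg at h
    have h3 : k + 3 ≤ j := by omega
    obtain ⟨x1, hx1⟩ := chain_some_of_le a b hab (by omega : k + 1 ≤ j) hju
    obtain ⟨x2, hx2⟩ := chain_some_of_le a b hab (by omega : j - 2 ≤ j) hju
    obtain ⟨x3, hx3⟩ : ∃ x3, chain a b hab (j - 2 + 1) = some x3 :=
      chain_some_of_le a b hab (by omega) hju
    have hbv : b v ≤ b x1 :=
      ((step_spec a b hab x).1 x1 (chain_step a b hab hxk hx1)).2.1 v hvx
    have hb12 : b x1 ≤ b x2 := chain_le a b hab (by omega) hx1 hx2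
    have hau' : a u' ≤ b x2 := le_trans hiv.1 (le_trans hbv hb12)
    have hu3 : b u' ≤ b x3 :=
      ((step_spec a b hab x2).1 x3 (chain_step a b hab hx2 hx3)).2.1 u' hau'
    have h3u : b x3 < b u' := by
      have : j - 2 + 1 < j := by omega
      exact chain_lt a b hab hx3 this hju
    exact absurd hu3 (not_le.mpr h3u)
  have : j = k := by omega
  rw [this] at hju
  rw [hxk] at hju
  exact (Option.some.inj hju).symm

end CFCNAux

/-- For an interval graph `G` (given by an interval representation `v ↦ [a v, b v]`)
with at least one edge, `2 ≤ χcf[G] ≤ 4`. -/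
theorem cfcn_interval_bounds {V : Type*} [Fintype V] (G : SimpleGraph V)
    (a b : V → ℝ) (hab : ∀ v : V, a v ≤ b v)
    (hrep : ∀ u v : V, u ≠ v →
      (G.Adj u v ↔ (Set.Icc (a u) (b u) ∩ Set.Icc (a v) (b v)).Nonempty))
    (hedge : ∃ u v : V, G.Adj u v) :
    2 ≤ sInf {k : ℕ | ∃ c : V → Fin k, IsCFCN G c} ∧
      sInf {k : ℕ | ∃ c : V → Fin k, IsCFCN G c} ≤ 4 := by
  obtain ⟨u0, v0, huv⟩ := hedge
  haveI : Nonempty V := ⟨u0⟩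
  have h4 : 4 ∈ {k : ℕ | ∃ c : V → Fin k, IsCFCN G c} :=
    ⟨cfcColoring a b hab, cfcColoring_isCFCN a b hab G hrep⟩
  have hne : {k : ℕ | ∃ c : V → Fin k, IsCFCN G c}.Nonempty := ⟨4, h4⟩
  have hmem := Nat.sInf_mem hne
  refine ⟨?_, Nat.sInf_le h4⟩
  obtain ⟨c, hc⟩ := hmem
  have hsmall : ∀ k : ℕ, k ≤ 1 → ¬ ∃ c : V → Fin k, IsCFCN G c := by
    rintro k hk ⟨c, hc⟩
    have hsub : ∀ t t' : Fin k, t = t' := fun t t' => Fin.ext (by omega)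
    obtain ⟨s, w, hw, huniq⟩ := hc v0
    have h1 : u0 = w := huniq u0 ⟨Or.inl huv.symm, hsub _ _⟩
    have h2 : v0 = w := huniq v0 ⟨Or.inr rfl, hsub _ _⟩
    exact (G.ne_of_adj huv) (h1.trans h2.symm)
  by_contra h
  push_neg at h
  exact hsmall _ (by omega) ⟨c, hc⟩
end

section
/- Let G be a finite connected interval graph with at least two edges. Then 2 ≤ χcf(G) ≤ 4. -/
section
open Classical

private lemma icc_inter {a1 b1 a2 b2 : ℝ} (h1 : a1 ≤ b1) (h2 : a2 ≤ b2) :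
    (Set.Icc a1 b1 ∩ Set.Icc a2 b2).Nonempty ↔ a2 ≤ b1 ∧ a1 ≤ b2 := by
  constructor
  · rintro ⟨x, ⟨hx1, hx2⟩, ⟨hx3, hx4⟩⟩
    exact ⟨le_trans hx3 hx2, le_trans hx1 hx4⟩
  · rintro ⟨h3, h4⟩
    exact ⟨max a1 a2, ⟨le_max_left _ _, max_le h1 h3⟩, ⟨le_max_right _ _, max_le h4 h2⟩⟩

private lemma exists_boundary {V : Type*} {G : SimpleGraph V} (p : V → Prop) :
    ∀ {x y : V}, G.Walk x y → p x → ¬ p y →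
    ∃ u w, G.Adj u w ∧ p u ∧ ¬ p w := by
  intro x y w
  induction w with
  | nil => intro hx hy; exact absurd hx hy
  | @cons x z y h q ih =>
    intro hx hy
    by_cases hz : p z
    · exact ih hz hy
    · exact ⟨x, z, h, hx, hz⟩

open Classical in
private noncomputable def skCol {V : Type*} (v : ℕ → V) (K : ℕ) : V → Fin 4 :=
  fun w => if h : ∃ i, i ≤ K ∧ v i = w then ⟨Nat.find h % 3 + 1, by omega⟩ else 0

private lemma skCol_v {V : Type*} (v : ℕ → V) (K : ℕ)
    (hinj : ∀ i j, i ≤ K → j ≤ K → v i = v j → i = j) {i : ℕ} (hi : i ≤ K) :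
    skCol v K (v i) = ⟨i % 3 + 1, by omega⟩ := by
  unfold skCol
  have hex : ∃ j, j ≤ K ∧ v j = v i := ⟨i, hi, rfl⟩
  rw [dif_pos hex]
  have hf := Nat.find_spec hex
  have h2 : Nat.find hex = i := hinj _ _ hf.1 hi hf.2
  simp [h2]

private lemma skCol_cases {V : Type*} (v : ℕ → V) (K : ℕ) (w : V) :
    skCol v K w = 0 ∨ ∃ i, i ≤ K ∧ v i = w ∧ skCol v K w = ⟨i % 3 + 1, by omega⟩ := by
  unfold skCol
  by_cases h : ∃ i, i ≤ K ∧ v i = w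
  · exact Or.inr ⟨Nat.find h, (Nat.find_spec h).1, (Nat.find_spec h).2, dif_pos h⟩
  · exact Or.inl (dif_neg h)

open Classical in
private noncomputable def starCol {V : Type*} (v0 u0 : V) : V → Fin 4 :=
  fun w => if w = v0 then 1 else if w = u0 then 2 else 0

private lemma upper_aux {V : Type*} [Fintype V] (G : SimpleGraph V)
    (a b : V → ℝ) (hab : ∀ v : V, a v ≤ b v)
    (hrep : ∀ u v : V, u ≠ v →
      (G.Adj u v ↔ (Set.Icc (a u) (b u) ∩ Set.Icc (a v) (b v)).Nonempty))
    (hconn : G.Connected) (hvert : ∃ x y : V, x ≠ y) :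
    ∃ c : V → Fin 4, IsCFON G c := by
  classical
  have hV : Nonempty V := hconn.nonempty
  -- greedy extension function
  have hfex : ∀ x : V, ∃ y : V, a y ≤ b x ∧ ∀ u, a u ≤ b x → b u ≤ b y := by
    intro x
    obtain ⟨y, hy, hmax⟩ := Finset.exists_max_image
      (Finset.univ.filter fun u => a u ≤ b x) b ⟨x, by simp [hab x]⟩
    refine ⟨y, by simpa using hy, fun u hu => hmax u (by simp [hu])⟩
  choose f hf1 hf2 using hfex
  obtain ⟨x₀, -, hx₀⟩ := Finset.exists_min_image Finset.univ a Finset.univ_nonempty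
  simp only [Finset.mem_univ, true_implies] at hx₀
  obtain ⟨v, hv0, hvs⟩ : ∃ v : ℕ → V, v 0 = x₀ ∧ ∀ k, v (k + 1) = f (v k) :=
    ⟨fun k => f^[k] x₀, rfl, fun k => Function.iterate_succ_apply' f k x₀⟩
  have hf1v : ∀ k, a (v (k + 1)) ≤ b (v k) := fun k => (hvs k) ▸ hf1 (v k)
  have hf2v : ∀ k u, a u ≤ b (v k) → b u ≤ b (v (k + 1)) := fun k u h =>
    (hvs k) ▸ hf2 (v k) u h
  have hmono : ∀ k, b (v k) ≤ b (v (k + 1)) := fun k => hf2v k (v k) (hab (v k))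
  have hmono' : ∀ i j, i ≤ j → b (v i) ≤ b (v j) :=
    fun i j h => monotone_nat_of_le_succ hmono h
  have hstall : ∃ k, b (v (k + 1)) = b (v k) := by
    by_contra h
    push_neg at h
    have hsm : StrictMono (fun k => b (v k)) :=
      strictMono_nat_of_lt_succ (fun k => lt_of_le_of_ne (hmono k) (Ne.symm (h k)))
    obtain ⟨i, j, hij, hvij⟩ := Finite.exists_ne_map_eq_of_infinite v
    exact hij (hsm.injective (by simp [hvij]))
  set K := Nat.find hstall with hKdef
  have hK : b (v (K + 1)) = b (v K) := Nat.find_spec hstall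
  have hKlt : ∀ k, k < K → b (v k) < b (v (k + 1)) := fun k hk =>
    lt_of_le_of_ne (hmono k) (fun hh => Nat.find_min hstall hk hh.symm)
  have hstrict : ∀ i j, i < j → j ≤ K → b (v i) < b (v j) := fun i j hij hjK =>
    lt_of_lt_of_le (hKlt i (lt_of_lt_of_le hij hjK)) (hmono' _ _ hij)
  have vinj : ∀ i j, i ≤ K → j ≤ K → v i = v j → i = j := by
    intro i j hi hj hv
    rcases lt_trichotomy i j with h | h | h
    · exact absurd (congrArg b hv) (ne_of_lt (hstrict i j h hj))
    · exact h
    · exact absurd (congrArg b hv).symm (ne_of_lt (hstrict j i h hi))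
  have disj : ∀ j, j + 2 ≤ K → b (v j) < a (v (j + 2)) := by
    intro j hj
    by_contra h
    push_neg at h
    exact absurd (hf2v j _ h) (not_le.mpr (hKlt (j + 1) (by omega)))
  have dom : ∀ w, a w ≤ b (v K) := by
    by_contra h
    push_neg at h
    obtain ⟨w, hw⟩ := h
    obtain ⟨p⟩ := hconn.preconnected (v K) w
    obtain ⟨u, u', huu', hu, hu'⟩ :=
      exists_boundary (fun z => a z ≤ b (v K)) p (hab (v K)) (not_le.mpr hw)
    have hint := (hrep u u' huu'.ne).mp huu'
    rw [icc_inter (hab u) (hab u')] at hint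
    have hbu : b u ≤ b (v (K + 1)) := hf2v K u hu
    rw [hK] at hbu
    exact hu' (hint.1.trans hbu)
  have hkex : ∀ w : V, ∃ k, a w ≤ b (v k) := fun w => ⟨K, dom w⟩
  obtain ⟨kf, hkf1, hkf2⟩ : ∃ kf : V → ℕ, (∀ w, a w ≤ b (v (kf w))) ∧
      (∀ w j, j < kf w → b (v j) < a w) :=
    ⟨fun w => Nat.find (hkex w), fun w => Nat.find_spec (hkex w),
      fun w j hj => not_le.mp (Nat.find_min (hkex w) hj)⟩
  have hkfK : ∀ w, kf w ≤ K := by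
    intro w
    by_contra h
    push_neg at h
    exact absurd (dom w) (not_le.mpr (hkf2 w K h))
  have meet : ∀ w, a (v (kf w)) ≤ b w := by
    intro w
    rcases Nat.eq_zero_or_eq_succ_pred (kf w) with h | h
    · rw [h, hv0]; exact (hx₀ w).trans (hab w)
    · rw [h]
      exact ((hf1v _).trans (le_of_lt (hkf2 w _ (by omega)))).trans (hab w)
  have range : ∀ w j, j ≤ K → a (v j) ≤ b w → a w ≤ b (v j) →
      kf w ≤ j ∧ j ≤ kf w + 2 := by
    intro w j hjK h1 h2
    constructor
    · by_contra h
      push_neg at h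
      exact absurd h2 (not_le.mpr (hkf2 w j h))
    · by_contra h
      push_neg at h
      have h2' : j - 2 + 2 = j := by omega
      have hd := disj (j - 2) (by omega)
      rw [h2'] at hd
      have hb1 : b w ≤ b (v (kf w + 1)) := hf2v _ _ (hkf1 w)
      have hb2 : b w ≤ b (v (j - 2)) := hb1.trans (hmono' _ _ (by omega))
      exact absurd (h1.trans hb2) (not_le.mpr hd)
  have hadj_sk : ∀ i, i < K → G.Adj (v i) (v (i + 1)) := by
    intro i hi
    have hne : v i ≠ v (i + 1) := fun h => absurd (congrArg b h) (ne_of_lt (hKlt i hi))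
    refine (hrep _ _ hne).mpr ?_
    rw [icc_inter (hab _) (hab _)]
    exact ⟨hf1v i, (hab _).trans (hmono i)⟩
  have hnsk : ∀ i j, i ≤ K → j ≤ K → G.Adj (v i) (v j) → (j + 1 = i ∨ j = i + 1) := by
    intro i j hi hj hadj
    have hij : i ≠ j := fun h => G.irrefl (h ▸ hadj)
    have hint := (hrep _ _ hadj.ne).mp hadj
    rw [icc_inter (hab _) (hab _)] at hint
    rcases lt_or_gt_of_ne hij with h | h
    · right
      by_contra hc
      have h2' : j - 2 + 2 = j := by omega
      have hd := disj (j - 2) (by omega)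
      rw [h2'] at hd
      have hb : b (v i) ≤ b (v (j - 2)) := hmono' _ _ (by omega)
      exact absurd (hint.1.trans hb) (not_le.mpr hd)
    · left
      by_contra hc
      have h2' : i - 2 + 2 = i := by omega
      have hd := disj (i - 2) (by omega)
      rw [h2'] at hd
      have hb : b (v j) ≤ b (v (i - 2)) := hmono' _ _ (by omega)
      exact absurd (hint.2.trans hb) (not_le.mpr hd)
  rcases Nat.eq_zero_or_pos K with hK0 | hKpos
  · -- star case: every vertex is adjacent to v 0
    have hall : ∀ w, w ≠ v 0 → G.Adj (v 0) w := by
      intro w hw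
      have hk0 : kf w = 0 := by have := hkfK w; omega
      refine (hrep _ _ (Ne.symm hw)).mpr ?_
      rw [icc_inter (hab _) (hab _)]
      constructor
      · have := hkf1 w; rw [hk0] at this; exact this
      · have := meet w; rw [hk0] at this; exact this
    obtain ⟨u0, hu0⟩ : ∃ u0 : V, u0 ≠ v 0 := by
      obtain ⟨x, y, hxy⟩ := hvert
      by_cases hx : x = v 0
      · exact ⟨y, fun h => hxy (by rw [hx, h])⟩
      · exact ⟨x, hx⟩
    refine ⟨starCol (v 0) u0, fun t => ?_⟩
    by_cases ht : t = v 0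
    · subst ht
      refine ⟨2, u0, ⟨hall u0 hu0, by unfold starCol; rw [if_neg hu0, if_pos rfl]⟩, ?_⟩
      rintro u' ⟨hadj', hc'⟩
      by_contra hne
      unfold starCol at hc'
      rw [if_neg hadj'.ne', if_neg hne] at hc'
      exact absurd hc' (by decide)
    · refine ⟨1, v 0, ⟨(hall t ht).symm, by unfold starCol; rw [if_pos rfl]⟩, ?_⟩
      rintro u' ⟨hadj', hc'⟩
      unfold starCol at hc'
      split_ifs at hc' with h1 h2
      · exact h1
      · exact absurd hc' (by decide)
      · exact absurd hc' (by decide)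
  · -- path case, K ≥ 1
    refine ⟨skCol v K, fun t => ?_⟩
    by_cases ht : ∃ i, i ≤ K ∧ v i = t
    · obtain ⟨i, hiK, rfl⟩ := ht
      rcases Nat.lt_or_ge i K with hi | hi
      · -- witness v (i+1)
        refine ⟨⟨(i + 1) % 3 + 1, by omega⟩, v (i + 1),
          ⟨hadj_sk i hi, skCol_v v K vinj (by omega)⟩, ?_⟩
        rintro u' ⟨hadj', hc'⟩
        rcases skCol_cases v K u' with h0 | ⟨j, hjK, rfl, hj⟩
        · rw [h0] at hc'
          have := congrArg Fin.val hc'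
          simp only [Fin.val_zero, Fin.val_mk] at this
          omega
        · rw [hj] at hc'
          have hval := congrArg Fin.val hc'
          simp only [Fin.val_mk] at hval
          have := hnsk i j hiK hjK hadj'
          have hji : j = i + 1 := by omega
          rw [hji]
      · -- i = K, witness v (K-1)
        have hiK' : i = K := le_antisymm hiK hi
        subst hiK'
        have hK1 : K - 1 + 1 = K := by omega
        have hadjK : G.Adj (v K) (v (K - 1)) := by
          have := hadj_sk (K - 1) (by omega)
          rw [hK1] at this
          exact this.symm
        refine ⟨⟨(K - 1) % 3 + 1, by omega⟩, v (K - 1),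
          ⟨hadjK, skCol_v v K vinj (by omega)⟩, ?_⟩
        rintro u' ⟨hadj', hc'⟩
        rcases skCol_cases v K u' with h0 | ⟨j, hjK, rfl, hj⟩
        · rw [h0] at hc'
          have := congrArg Fin.val hc'
          simp only [Fin.val_zero, Fin.val_mk] at this
          omega
        · have := hnsk K j le_rfl hjK hadj'
          have hji : j = K - 1 := by omega
          rw [hji]
    · -- non-skeleton vertex
      have htne : ∀ j, j ≤ K → t ≠ v j := by
        intro j hj h
        exact ht ⟨j, hj, h.symm⟩
      have hadjt : G.Adj t (v (kf t)) := by
        refine (hrep _ _ (htne _ (hkfK t))).mpr ?_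
        rw [icc_inter (hab _) (hab _)]
        exact ⟨meet t, hkf1 t⟩
      refine ⟨⟨(kf t) % 3 + 1, by omega⟩, v (kf t),
        ⟨hadjt, skCol_v v K vinj (hkfK t)⟩, ?_⟩
      rintro u' ⟨hadj', hc'⟩
      rcases skCol_cases v K u' with h0 | ⟨j, hjK, rfl, hj⟩
      · rw [h0] at hc'
        have := congrArg Fin.val hc'
        simp only [Fin.val_zero, Fin.val_mk] at this
        omega
      · rw [hj] at hc'
        have hval := congrArg Fin.val hc'
        simp only [Fin.val_mk] at hval
        have hint := (hrep _ _ (htne j hjK)).mp hadj'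
        rw [icc_inter (hab _) (hab _)] at hint
        have hr := range t j hjK hint.1 hint.2
        have : j = kf t := by omega
        rw [this]
end

private lemma walk_two {V : Type*} {G : SimpleGraph V}
    (huniq : ∀ t u u' : V, G.Adj t u → G.Adj t u' → u = u') {x y : V} (hxy : G.Adj x y) :
    ∀ {s t : V}, G.Walk s t → (s = x ∨ s = y) → (t = x ∨ t = y) := by
  intro s t w
  induction w with
  | nil => exact id
  | @cons s m t h q ih =>
    intro hs
    apply ih
    rcases hs with rfl | rfl
    · right; exact huniq s m y h hxy
    · left; exact huniq s m x h hxy.symm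

private lemma edge_endpoints {V : Type*} {G : SimpleGraph V} {e : Sym2 V}
    (he : e ∈ G.edgeSet) : ∃ x y : V, G.Adj x y ∧ e = s(x, y) := by
  revert he
  refine Sym2.ind (fun x y h => ⟨x, y, G.mem_edgeSet.mp h, rfl⟩) e


/-- For a connected interval graph `G` (given by an interval representation
`v ↦ [a v, b v]`) with at least two edges, `2 ≤ χcf(G) ≤ 4`. -/
theorem cfon_interval_bounds {V : Type*} [Fintype V] (G : SimpleGraph V)
    (a b : V → ℝ) (hab : ∀ v : V, a v ≤ b v)
    (hrep : ∀ u v : V, u ≠ v →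
      (G.Adj u v ↔ (Set.Icc (a u) (b u) ∩ Set.Icc (a v) (b v)).Nonempty))
    (hconn : G.Connected)
    (hedges : ∃ e₁ e₂ : Sym2 V, e₁ ∈ G.edgeSet ∧ e₂ ∈ G.edgeSet ∧ e₁ ≠ e₂) :
    2 ≤ sInf {k : ℕ | ∃ c : V → Fin k, IsCFON G c} ∧
      sInf {k : ℕ | ∃ c : V → Fin k, IsCFON G c} ≤ 4 := by
  classical
  obtain ⟨e₁, e₂, he₁, he₂, hne12⟩ := hedges
  obtain ⟨x, y, hxy, hex⟩ := edge_endpoints he₁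
  obtain ⟨p, q, hpq, hep⟩ := edge_endpoints he₂
  have hub : ∃ c : V → Fin 4, IsCFON G c :=
    upper_aux G a b hab hrep hconn ⟨x, y, hxy.ne⟩
  have h4 : 4 ∈ {k : ℕ | ∃ c : V → Fin k, IsCFON G c} := hub
  have h2 : ∀ k : ℕ, (∃ c : V → Fin k, IsCFON G c) → 2 ≤ k := by
    rintro k ⟨c, hc⟩
    by_contra hk
    push_neg at hk
    interval_cases k
    · exact (c x).elim0
    · have huniq : ∀ t u u' : V, G.Adj t u → G.Adj t u' → u = u' := by
        intro t u u' h1 h2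
        obtain ⟨col, w, ⟨hw1, hw2⟩, hw3⟩ := hc t
        have e1 := hw3 u ⟨h1, Subsingleton.elim _ _⟩
        have e2 := hw3 u' ⟨h2, Subsingleton.elim _ _⟩
        rw [e1, e2]
      obtain ⟨wp⟩ := hconn.preconnected x p
      obtain ⟨wq⟩ := hconn.preconnected x q
      have hp := walk_two huniq hxy wp (Or.inl rfl)
      have hq := walk_two huniq hxy wq (Or.inl rfl)
      apply hne12
      rw [hex, hep]
      rcases hp with rfl | rfl
      · rcases hq with rfl | rfl
        · exact absurd rfl hpq.ne
        · exact Sym2.eq_swap.symm ▸ rfl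
      · rcases hq with rfl | rfl
        · exact Sym2.eq_swap
        · exact absurd rfl hpq.ne
  have hSne : {k : ℕ | ∃ c : V → Fin k, IsCFON G c}.Nonempty := ⟨4, h4⟩
  exact ⟨h2 _ (Nat.sInf_mem hSne), Nat.sInf_le h4⟩
end

section
/- Every finite connected cograph G on at least two vertices admits a conflict-free closed neighborhood coloring with at most 3 colors; that is, χcf[G] ≤ 3. -/
/-- `G` contains an induced path on four vertices. -/
def HasInducedP4 {W : Type*} (G : SimpleGraph W) : Prop :=
  ∃ a b c d : W, a ≠ c ∧ a ≠ d ∧ b ≠ d ∧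
    G.Adj a b ∧ G.Adj b c ∧ G.Adj c d ∧ ¬ G.Adj a c ∧ ¬ G.Adj a d ∧ ¬ G.Adj b d

open scoped Classical in
/-- The set of vertices dominated by the edge `{u,v}`. -/
noncomputable def Dset {V : Type*} [Fintype V] (G : SimpleGraph V) (u v : V) : Finset V :=
  Finset.univ.filter (fun y => G.Adj u y ∨ G.Adj v y ∨ y = u ∨ y = v)

lemma mem_Dset {V : Type*} [Fintype V] (G : SimpleGraph V) (u v y : V) :
    y ∈ Dset G u v ↔ (G.Adj u y ∨ G.Adj v y ∨ y = u ∨ y = v) := by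
  classical
  simp [Dset]

lemma Dset_comm {V : Type*} [Fintype V] (G : SimpleGraph V) (u v : V) :
    Dset G u v = Dset G v u := by
  ext y; simp only [mem_Dset]; tauto

lemma boundary {V : Type*} (G : SimpleGraph V) (S : Set V) {a b : V} (p : G.Walk a b)
    (ha : a ∉ S) (hb : b ∈ S) : ∃ x y, x ∉ S ∧ y ∈ S ∧ G.Adj x y := by
  induction p with
  | nil => exact absurd hb ha
  | @cons a c b h q ih =>
    by_cases hc : c ∈ S
    · exact ⟨a, c, ha, hc, h⟩
    · exact ih hc hb

lemma key {V : Type*} [Fintype V] (G : SimpleGraph V) (hP4 : ¬ HasInducedP4 G)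
    {u v w x : V} (huv : G.Adj u v)
    (hmax : ∀ a b, G.Adj a b → (Dset G a b).card ≤ (Dset G u v).card)
    (hw : w ∉ Dset G u v) (hwx : G.Adj w x) (hxu : G.Adj x u) : False := by
  rw [mem_Dset] at hw
  push_neg at hw
  obtain ⟨h1, h2, h3, h4⟩ := hw
  by_cases hxv : G.Adj x v
  · -- The edge {u, x} dominates strictly more, contradiction with maximality.
    have hsub : Dset G u v ⊆ Dset G u x := by
      intro y hy
      rw [mem_Dset] at hy ⊢
      rcases hy with h | h | h | h
      · exact Or.inl h
      · by_contra hy'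
        push_neg at hy'
        obtain ⟨hyu, hyx, hy1, hy2⟩ := hy'
        by_cases hyw : G.Adj y w
        · exact hP4 ⟨u, v, y, w, fun e => hy1 e.symm, fun e => h3 e.symm,
            fun e => h4 e.symm, huv, h, hyw, hyu, h1, h2⟩
        · exact hP4 ⟨w, x, v, y, h4, fun e => (h2 (e ▸ h)).elim, fun e => hy2 e.symm,
            hwx, hxv, h, fun e => h2 e.symm, fun e => hyw e.symm, hyx⟩
      · exact Or.inr (Or.inr (Or.inl h))
      · rw [h]; exact Or.inl huv
    have hwin : w ∈ Dset G u x := by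
      rw [mem_Dset]; exact Or.inr (Or.inl hwx.symm)
    have hwout : w ∉ Dset G u v := by
      rw [mem_Dset]; push_neg; exact ⟨h1, h2, h3, h4⟩
    have hlt : (Dset G u v).card < (Dset G u x).card :=
      Finset.card_lt_card ((Finset.ssubset_iff_of_subset hsub).mpr ⟨w, hwin, hwout⟩)
    exact absurd (hmax u x hxu.symm) (not_le.mpr hlt)
  · -- w - x - u - v is an induced P4.
    exact hP4 ⟨w, x, u, v, fun e => h3 e, fun e => h4 e, fun e => h2 (by rw [← e]; exact hwx.symm),
      hwx, hxu, huv, fun e => h1 e.symm, fun e => h2 e.symm, hxv⟩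

/-- Every connected cograph (`P₄`-free graph) on at least two vertices has a CF-CN
coloring with at most 3 colors; that is, `χcf[G] ≤ 3`. -/
theorem cfcn_cograph_le_three {V : Type*} [Fintype V] (G : SimpleGraph V)
    (hconn : G.Connected) (hcard : 2 ≤ Fintype.card V)
    (hP4free : ¬ HasInducedP4 G) :
    ∃ c : V → Fin 3, IsCFCN G c := by
  classical
  -- there is an edge
  obtain ⟨a, b, hab⟩ := Fintype.exists_pair_of_one_lt_card (α := V) (by omega)
  have hedge : ∃ u v : V, G.Adj u v := by
    obtain ⟨p⟩ := hconn a b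
    cases p with
    | nil => exact absurd rfl hab
    | cons h q => exact ⟨_, _, h⟩
  obtain ⟨u0, v0, h0⟩ := hedge
  -- choose a maximizing edge
  set E : Finset (V × V) := (Finset.univ ×ˢ Finset.univ).filter (fun p => G.Adj p.1 p.2) with hE
  have hEne : E.Nonempty := ⟨(u0, v0), by simp [hE, h0]⟩
  obtain ⟨p, hpE, hpmax⟩ := E.exists_max_image (fun p => (Dset G p.1 p.2).card) hEne
  obtain ⟨u, v⟩ := p
  have huv : G.Adj u v := by simpa [hE] using hpE
  have hmax : ∀ a b, G.Adj a b → (Dset G a b).card ≤ (Dset G u v).card := by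
    intro a b h
    exact hpmax (a, b) (by simp [hE, h])
  -- the edge {u,v} dominates everything
  have hdom : ∀ y, G.Adj u y ∨ G.Adj v y ∨ y = u ∨ y = v := by
    by_contra hcon
    push_neg at hcon
    obtain ⟨w, hw⟩ := hcon
    have hwD : w ∉ Dset G u v := by rw [mem_Dset]; push_neg; exact hw
    have huD : (u : V) ∈ (↑(Dset G u v) : Set V) := by
      rw [Finset.mem_coe, mem_Dset]
      exact Or.inr (Or.inr (Or.inl rfl))
    obtain ⟨p⟩ := hconn w u
    obtain ⟨x, y, hx, hy, hxy⟩ := boundary G (↑(Dset G u v)) p (by simpa using hwD) huD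
    have hx' : x ∉ Dset G u v := by simpa using hx
    have hy' : y ∈ Dset G u v := by simpa using hy
    rw [mem_Dset] at hy'
    rcases hy' with h | h | h | h
    · exact key G hP4free huv hmax hx' hxy h.symm
    · refine key G hP4free huv.symm (fun a b hab' => ?_) (by rwa [← Dset_comm G u v]) hxy h.symm
      rw [← Dset_comm G u v]; exact hmax a b hab'
    · subst h
      exact hx' (by rw [mem_Dset]; exact Or.inl hxy.symm)
    · subst h
      exact hx' (by rw [mem_Dset]; exact Or.inr (Or.inl hxy.symm))
  -- define the coloring
  have hune : u ≠ v := huv.ne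
  refine ⟨fun y => if y = u then 1 else if y = v then 2 else 0, ?_⟩
  set c : V → Fin 3 := fun y => if y = u then 1 else if y = v then 2 else 0 with hc
  have hc1 : ∀ z, c z = 1 ↔ z = u := by
    intro z
    constructor
    · intro hz
      simp only [hc] at hz
      split_ifs at hz with h h'
      · exact h
      · exact absurd hz (by decide)
      · exact absurd hz (by decide)
    · intro hz; simp [hc, hz]
  have hc2 : ∀ z, c z = 2 ↔ z = v := by
    intro z
    constructor
    · intro hz
      simp only [hc] at hz
      split_ifs at hz with h h'
      · exact absurd hz (by decide)
      · exact h'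
      · exact absurd hz (by decide)
    · intro hz
      subst hz
      simp only [hc, if_neg (Ne.symm hune), if_pos rfl]
      simp
  intro y
  rcases hdom y with h | h | h | h
  · exact ⟨1, u, ⟨Or.inl h.symm, (hc1 u).mpr rfl⟩, fun z hz => (hc1 z).mp hz.2⟩
  · exact ⟨2, v, ⟨Or.inl h.symm, (hc2 v).mpr rfl⟩, fun z hz => (hc2 z).mp hz.2⟩
  · subst h
    exact ⟨2, v, ⟨Or.inl huv, (hc2 v).mpr rfl⟩, fun z hz => (hc2 z).mp hz.2⟩
  · subst h
    exact ⟨1, u, ⟨Or.inl huv.symm, (hc1 u).mpr rfl⟩, fun z hz => (hc1 z).mp hz.2⟩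
end

section
/- Every finite connected cograph G on at least two vertices admits a conflict-free open neighborhood coloring with at most 3 colors; that is, χcf(G) ≤ 3. -/
/-- Along a walk from a vertex outside `D` to a vertex in `D`, there is an edge
crossing the boundary of `D`. -/
lemma exists_boundary_edge {V : Type*} {G : SimpleGraph V} (D : Set V) :
    ∀ {a b : V}, G.Walk a b → a ∉ D → b ∈ D →
      ∃ z w, G.Adj z w ∧ z ∉ D ∧ w ∈ D := by
  intro a b p
  induction p with
  | nil => intro h1 h2; exact absurd h2 h1
  | @cons u v w h q ih =>
    intro h1 h2
    by_cases hc : v ∈ D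
    · exact ⟨u, v, h, h1, hc⟩
    · exact ih hc h2

/-- Every connected cograph (`P₄`-free graph) on at least two vertices has a CF-ON
coloring with at most 3 colors; that is, `χcf(G) ≤ 3`. -/
theorem cfon_cograph_le_three {V : Type*} [Fintype V] (G : SimpleGraph V)
    (hconn : G.Connected) (hcard : 2 ≤ Fintype.card V)
    (hP4free : ¬ HasInducedP4 G) :
    ∃ c : V → Fin 3, IsCFON G c := by
  classical
  -- there exists at least one edge
  have hadj : ∃ x y : V, G.Adj x y := by
    obtain ⟨a, b, hne⟩ := Fintype.exists_pair_of_one_lt_card hcard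
    obtain ⟨p⟩ := hconn.preconnected a b
    cases p with
    | nil => exact absurd rfl hne
    | cons h _ => exact ⟨_, _, h⟩
  -- pick an edge maximizing the number of dominated vertices
  set f : V × V → ℕ :=
    fun p => (Finset.univ.filter fun v => G.Adj v p.1 ∨ G.Adj v p.2).card with hf
  set s : Finset (V × V) := Finset.univ.filter fun p : V × V => G.Adj p.1 p.2 with hs
  have hs_ne : s.Nonempty := by
    obtain ⟨x, y, hxy⟩ := hadj
    exact ⟨(x, y), by simp [hs, hxy]⟩
  obtain ⟨p, hp, hmax⟩ := Finset.exists_max_image s f hs_ne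
  obtain ⟨x, y⟩ := p
  have hxy : G.Adj x y := by simpa [hs] using hp
  set D : Set V := {v | G.Adj v x ∨ G.Adj v y} with hD
  have hxD : x ∈ D := Or.inr hxy
  have hyD : y ∈ D := Or.inl hxy.symm
  -- the main claim: the edge (x,y) dominates everything
  have hdom : ∀ v, G.Adj v x ∨ G.Adj v y := by
    by_contra hnd
    push_neg at hnd
    obtain ⟨z, hzx0, hzy0⟩ := hnd
    have hzD : z ∉ D := fun h => h.elim hzx0 hzy0
    obtain ⟨q⟩ := hconn.preconnected z x
    obtain ⟨z', w', hzw, hz', hw'⟩ := exists_boundary_edge D q hzD hxD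
    have hz'x : ¬ G.Adj z' x := fun h => hz' (Or.inl h)
    have hz'y : ¬ G.Adj z' y := fun h => hz' (Or.inr h)
    have hz'nx : z' ≠ x := fun h => hz' (h ▸ hxD)
    have hz'ny : z' ≠ y := fun h => hz' (h ▸ hyD)
    -- w' is adjacent to both x and y
    have wxy : G.Adj w' x ∧ G.Adj w' y := by
      rcases hw' with hwx | hwy
      · refine ⟨hwx, ?_⟩
        by_contra hwy
        have hwny : w' ≠ y := fun h => hz'y (h ▸ hzw)
        exact hP4free ⟨z', w', x, y, hz'nx, hz'ny, hwny,
          hzw, hwx, hxy, hz'x, hz'y, hwy⟩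
      · refine ⟨?_, hwy⟩
        by_contra hwx
        have hwnx : w' ≠ x := fun h => hz'x (h ▸ hzw)
        exact hP4free ⟨z', w', y, x, hz'ny, hz'nx, hwnx,
          hzw, hwy, hxy.symm, hz'y, hz'x, hwx⟩
    obtain ⟨wx, wy⟩ := wxy
    -- every vertex adjacent to y is adjacent to x or w'
    have hclaim : ∀ u, G.Adj u y → G.Adj u x ∨ G.Adj u w' := by
      intro u huy
      by_contra hcon
      push_neg at hcon
      obtain ⟨hux, huw⟩ := hcon
      by_cases hzu : G.Adj z' u
      · -- induced P4 : x - y - u - z'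
        have hxu : x ≠ u := fun h => huw (h ▸ wx.symm)
        exact hP4free ⟨x, y, u, z', hxu, hz'nx.symm, hz'ny.symm,
          hxy, huy.symm, hzu.symm,
          fun h => hux h.symm, fun h => hz'x h.symm, fun h => hz'y h.symm⟩
      · -- induced P4 : z' - w' - y - u
        have hz'nu : z' ≠ u := fun h => hz'y (h ▸ huy)
        have hwnu : w' ≠ u := fun h => hux (h ▸ wx)
        exact hP4free ⟨z', w', y, u, hz'ny, hz'nu, hwnu,
          hzw, wy, huy.symm, hz'y, hzu, fun h => huw h.symm⟩
    -- the edge (x, w') dominates strictly more, contradicting maximality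
    have hsub : (Finset.univ.filter fun v => G.Adj v x ∨ G.Adj v y) ⊂
        (Finset.univ.filter fun v => G.Adj v x ∨ G.Adj v w') := by
      constructor
      · intro v hv
        simp only [Finset.mem_filter, Finset.mem_univ, true_and] at hv ⊢
        rcases hv with h | h
        · exact Or.inl h
        · exact hclaim v h
      · intro hcont
        have : z' ∈ (Finset.univ.filter fun v => G.Adj v x ∨ G.Adj v w') := by
          simp [hzw]
        have hz'mem := hcont this
        simp only [Finset.mem_filter, Finset.mem_univ, true_and] at hz'mem
        exact hz' hz'mem
    have hlt : f (x, y) < f (x, w') := Finset.card_lt_card hsub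
    have hle : f (x, w') ≤ f (x, y) := hmax (x, w') (by simp [hs, wx.symm])
    omega
  -- the coloring
  have hxny : x ≠ y := hxy.ne
  refine ⟨fun v => if v = x then 1 else if v = y then 2 else 0, ?_⟩
  intro v
  rcases hdom v with hvx | hvy
  · refine ⟨1, x, ⟨hvx, by simp⟩, ?_⟩
    rintro u ⟨hu, hcu⟩
    by_cases hux : u = x
    · exact hux
    · by_cases huy : u = y
      · subst huy; simp [hxny.symm] at hcu
      · simp [hux, huy] at hcu
  · refine ⟨2, y, ⟨hvy, by simp [hxny.symm]⟩, ?_⟩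
    rintro u ⟨hu, hcu⟩
    by_cases huy : u = y
    · exact huy
    · by_cases hux : u = x
      · simp [hux, hxny] at hcu
      · simp [hux, huy] at hcu
end
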